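/- arXiv:2301.07948 — 8 statements merged into one kernel-verified Lean document; each statement's English description precedes it below -/
import Mathlib

section
/- Let R be a ring and let m > n be two fixed positive integers. Then the following are equivalent: (1) x^m = x^n for all x ∈ R; (2) every element x ∈ R can be written as x = a + b where a^n = 0, b^(m−n+1) = b, a·b = b·a = 0, and moreover the characteristic of R is finite (ringChar R ≠ 0). -/
/-- For a ring `R` and fixed positive integers `m > n`, one has `x ^ m = x ^ n` for
all `x ∈ R` if and only if every `x ∈ R` can be written as `x = a + b` with
`a ^ n = 0`, `b ^ (m - n + 1) = b`, `a * b = b * a = 0`, and the characteristic of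
`R` is finite. -/
theorem pow_eq_pow_iff_decomposition (R : Type*) [Ring R] (m n : ℕ)
    (hn : 0 < n) (hmn : n < m) :
    (∀ x : R, x ^ m = x ^ n) ↔
      ((∀ x : R, ∃ a b : R, x = a + b ∧ a ^ n = 0 ∧ b ^ (m - n + 1) = b ∧
          a * b = 0 ∧ b * a = 0) ∧ ringChar R ≠ 0) := by
  set k := m - n with hk
  have hk1 : 1 ≤ k := by omega
  have hm : m = n + k := by omega
  constructor
  · intro h
    have key : ∀ x : R, ∀ s, n ≤ s → ∀ j, x ^ (s + j * k) = x ^ s := by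
      intro x s hs j
      induction j with
      | zero => simp
      | succ j ih =>
        have h1 : x ^ (s + j * k + k) = x ^ (s + j * k) := by
          have e1 : s + j * k + k = (s + j * k - n) + m := by omega
          have e2 : s + j * k = (s + j * k - n) + n := by omega
          rw [e1, pow_add, h x, ← pow_add, ← e2]
        have e3 : s + (j + 1) * k = s + j * k + k := by ring
        rw [e3, h1, ih]
    constructor
    · intro x
      set N := k * n with hN
      have hNn : n ≤ N := Nat.le_mul_of_pos_left n hk1
      have key2 : ∀ s, n ≤ s → x ^ (s + N) = x ^ s := by
        intro s hs
        have := key x s hs n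
        rw [Nat.mul_comm] at this
        exact this
      refine ⟨x - x ^ (N + 1), x ^ (N + 1), by abel, ?_, ?_, ?_, ?_⟩
      · -- nilpotency
        have ha : x - x ^ (N + 1) = x * (1 - x ^ N) := by
          rw [mul_sub, mul_one, ← pow_succ']
        have hcomm : Commute x (1 - x ^ N) :=
          (Commute.one_right x).sub_right ((Commute.refl x).pow_right N)
        rw [ha, hcomm.mul_pow]
        have hzero : x ^ n * (1 - x ^ N) = 0 := by
          rw [mul_sub, mul_one, ← pow_add, key2 n le_rfl, sub_self]
        obtain ⟨n', rfl⟩ : ∃ n', n = n' + 1 := ⟨n - 1, by omega⟩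
        rw [pow_succ' (1 - x ^ N) n', ← mul_assoc, hzero, zero_mul]
      · -- b-potency
        rw [← pow_mul]
        have e : (N + 1) * (k + 1) = (N + 1) + (N + 1) * k := by ring
        rw [e, key x (N + 1) (by omega) (N + 1)]
      · -- a * b = 0
        rw [sub_mul, ← pow_succ', ← pow_add,
          show N + 1 + (N + 1) = N + 1 + 1 + N from by omega,
          key2 (N + 1 + 1) (by omega), sub_self]
      · -- b * a = 0
        rw [mul_sub, ← pow_succ, ← pow_add,
          show N + 1 + (N + 1) = N + 1 + 1 + N from by omega,
          key2 (N + 1 + 1) (by omega), sub_self]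
    · -- finite characteristic
      intro hc
      have h2 : ((2 ^ m : ℕ) : R) = ((2 ^ n : ℕ) : R) := by
        push_cast
        exact h 2
      have hle : 2 ^ n ≤ 2 ^ m := Nat.pow_le_pow_right (by norm_num) hmn.le
      have hcast : ((2 ^ m - 2 ^ n : ℕ) : R) = 0 := by
        rw [Nat.cast_sub hle, h2, sub_self]
      have hdvd : ringChar R ∣ 2 ^ m - 2 ^ n := ringChar.dvd hcast
      rw [hc] at hdvd
      have : 2 ^ m - 2 ^ n = 0 := Nat.eq_zero_of_zero_dvd hdvd
      have hlt : 2 ^ n < 2 ^ m := Nat.pow_lt_pow_right (by norm_num) hmn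
      omega
  · rintro ⟨hdec, -⟩ x
    obtain ⟨a, b, rfl, ha, hb, hab, hba⟩ := hdec x
    have hane : ∀ j : ℕ, a ^ (j + 1) * b = 0 := by
      intro j
      rw [pow_succ, mul_assoc, hab, mul_zero]
    have hbne : ∀ j : ℕ, b ^ (j + 1) * a = 0 := by
      intro j
      rw [pow_succ, mul_assoc, hba, mul_zero]
    have hsum : ∀ j : ℕ, (a + b) ^ (j + 1) = a ^ (j + 1) + b ^ (j + 1) := by
      intro j
      induction j with
      | zero => simp
      | succ j ih =>
        rw [pow_succ, ih, add_mul, mul_add, mul_add, hane j, hbne j,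
          add_zero, zero_add, ← pow_succ, ← pow_succ]
    obtain ⟨n', rfl⟩ : ∃ n', n = n' + 1 := ⟨n - 1, by omega⟩
    obtain ⟨m', rfl⟩ : ∃ m', m = m' + 1 := ⟨m - 1, by omega⟩
    have haz : a ^ (m' + 1) = 0 := by rw [hm, pow_add, ha, zero_mul]
    have hbstep : ∀ s : ℕ, b ^ (s + 1 + k) = b ^ (s + 1) := by
      intro s
      rw [show s + 1 + k = s + (k + 1) from by omega, pow_add, hb, ← pow_succ]
    rw [hsum, hsum, ha, haz, zero_add, zero_add,
      show m' + 1 = n' + 1 + k from hm, hbstep n']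
end

section
/- For a ring R, the following are equivalent: (1) every element of the Jacobson radical J(R) is nilpotent, and for every x ∈ R there exists an integer m ≥ 2 with x^m − x ∈ J(R) (i.e., R/J(R) is potent); (2) R is a periodic NI ring, i.e., R is periodic and the set Nil(R) of nilpotent elements of R is a two-sided ideal. -/
section JacobsonHelpers

variable {R : Type*} [Ring R]


lemma myExistsLeftInv {a : R} (ha : a ∈ Ideal.jacobson (⊥ : Ideal R)) :
    ∃ z : R, z * (1 + a) = 1 := by
  obtain ⟨z, hz⟩ := Ideal.mem_jacobson_iff.mp ha 1
  rw [Ideal.mem_bot] at hz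
  refine ⟨z, ?_⟩
  have h2 : z * (1 + a) - 1 = z * 1 * a + z - 1 := by noncomm_ring
  rw [hz] at h2
  rwa [sub_eq_zero] at h2

lemma myIsUnitOneAdd {a : R} (ha : a ∈ Ideal.jacobson (⊥ : Ideal R)) :
    IsUnit (1 + a) := by
  obtain ⟨z, hz⟩ := myExistsLeftInv ha
  have hz' : z = 1 + -(z * a) := by
    have h : z + z * a = 1 := by rw [← hz]; noncomm_ring
    rw [← h]; abel
  have hmem : -(z * a) ∈ Ideal.jacobson (⊥ : Ideal R) :=
    neg_mem (Ideal.mul_mem_left _ z ha)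
  obtain ⟨w, hw⟩ := myExistsLeftInv hmem
  rw [← hz'] at hw
  have hw2 : w = 1 + a := by
    calc w = w * (z * (1 + a)) := by rw [hz, mul_one]
    _ = (w * z) * (1 + a) := by rw [mul_assoc]
    _ = 1 + a := by rw [hw, one_mul]
  exact ⟨⟨1 + a, z, by rw [← hw2]; exact hw, hz⟩, rfl⟩

lemma myIsUnitSwap {a b : R} (h : IsUnit (1 + a * b)) : IsUnit (1 + b * a) := by
  obtain ⟨u, hu⟩ := h
  set v := ((u⁻¹ : Rˣ) : R) with hv
  have h1 : (1 + a * b) * v = 1 := by rw [← hu]; exact u.mul_inv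
  have h2 : v * (1 + a * b) = 1 := by rw [← hu]; exact u.inv_mul
  have h1' : v + a * b * v = 1 := by rw [← h1]; noncomm_ring
  have h2' : v + v * (a * b) = 1 := by rw [← h2]; noncomm_ring
  refine ⟨⟨1 + b * a, 1 - b * v * a, ?_, ?_⟩, rfl⟩
  · have e : (1 + b * a) * (1 - b * v * a) = 1 + b * a - b * ((v + a * b * v) * a) := by
      noncomm_ring
    rw [e, h1']; noncomm_ring
  · have e : (1 - b * v * a) * (1 + b * a) = 1 + b * a - b * ((v + v * (a * b)) * a) := by
      noncomm_ring
    rw [e, h2']; noncomm_ring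

lemma myMemJacobsonIff {x : R} :
    x ∈ Ideal.jacobson (⊥ : Ideal R) ↔ ∀ r : R, IsUnit (1 + r * x) := by
  constructor
  · intro hx r
    exact myIsUnitOneAdd (Ideal.mul_mem_left _ r hx)
  · intro h
    refine Ideal.mem_jacobson_iff.mpr fun y => ?_
    obtain ⟨u, hu⟩ := h y
    refine ⟨((u⁻¹ : Rˣ) : R), ?_⟩
    rw [Ideal.mem_bot]
    have h2 : ((u⁻¹ : Rˣ) : R) * (1 + y * x) = 1 := by rw [← hu]; exact u.inv_mul
    calc ((u⁻¹ : Rˣ) : R) * y * x + ((u⁻¹ : Rˣ) : R) - 1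
        = ((u⁻¹ : Rˣ) : R) * (1 + y * x) - 1 := by noncomm_ring
    _ = 0 := by rw [h2, sub_self]

lemma myMulRightMem {x : R} (hx : x ∈ Ideal.jacobson (⊥ : Ideal R)) (r : R) :
    x * r ∈ Ideal.jacobson (⊥ : Ideal R) := by
  refine myMemJacobsonIff.mpr fun s => ?_
  have h1 : IsUnit (1 + r * (s * x)) := by
    rw [← mul_assoc]
    exact myIsUnitOneAdd (Ideal.mul_mem_left _ (r * s) hx)
  have h2 := myIsUnitSwap h1
  rwa [mul_assoc] at h2

lemma myPowStable {x : R} {b s : ℕ} (h : x ^ (b + s) = x ^ b) :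
    ∀ j, x ^ (b + s * j) = x ^ b := by
  intro j
  induction j with
  | zero => simp
  | succ j ih =>
    have he : b + s * (j + 1) = (b + s * j) + s := by ring
    rw [he, pow_add, ih, ← pow_add, h]

lemma myKeyNilpotent {x : R} {b s : ℕ} (hb : 0 < b) (h : x ^ (b + s) = x ^ b) :
    IsNilpotent (x ^ (s + 1) - x) := by
  refine ⟨b, ?_⟩
  have hc : Commute x (x ^ s - 1) :=
    ((Commute.refl x).pow_right s).sub_right (Commute.one_right x)
  have hfac : x ^ (s + 1) - x = x * (x ^ s - 1) := by
    rw [mul_sub, mul_one, ← pow_succ']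
  rw [hfac, hc.mul_pow]
  have hcomm : Commute (x ^ s) (-1 : R) := (Commute.one_right (x ^ s)).neg_right
  have hexp : (x ^ s - 1) ^ b
      = ∑ i ∈ Finset.range (b + 1), (x ^ s) ^ i * (-1 : R) ^ (b - i) * (b.choose i : R) := by
    rw [sub_eq_add_neg, hcomm.add_pow]
  rw [hexp, Finset.mul_sum]
  have hterm : ∀ i ∈ Finset.range (b + 1),
      x ^ b * ((x ^ s) ^ i * (-1 : R) ^ (b - i) * (b.choose i : R))
        = x ^ b * ((-1 : R) ^ (b - i) * (b.choose i : R)) := by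
    intro i _
    have : x ^ b * (x ^ s) ^ i = x ^ b := by
      rw [← pow_mul, ← pow_add, myPowStable h i]
    rw [← mul_assoc, ← mul_assoc, this, mul_assoc]
  rw [Finset.sum_congr rfl hterm, ← Finset.mul_sum]
  have hz : ∑ i ∈ Finset.range (b + 1), (-1 : R) ^ (b - i) * (b.choose i : R) = 0 := by
    have h3 := ((Commute.one_right (1 : R)).neg_right).add_pow b
    simp only [one_pow, one_mul] at h3
    rw [← h3]
    simp [hb.ne']
  rw [hz, mul_zero]

lemma myPeriodic [Nontrivial R]
    (hJnil : ∀ x ∈ Ideal.jacobson (⊥ : Ideal R), IsNilpotent x)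
    (hpot : ∀ x : R, ∃ m : ℕ, 2 ≤ m ∧ x ^ m - x ∈ Ideal.jacobson (⊥ : Ideal R)) :
    ∀ x : R, ∃ m n : ℕ, 0 < n ∧ n < m ∧ x ^ m = x ^ n := by
  -- finite characteristic
  obtain ⟨m2, hm2, hv2⟩ := hpot 2
  obtain ⟨k2, hk2⟩ := hJnil _ hv2
  have hcast : ((2 : R) ^ m2 - 2) = ((2 ^ m2 - 2 : ℕ) : R) := by
    have h2m : (2 : ℕ) ≤ 2 ^ m2 := by
      calc (2:ℕ) = 2 ^ 1 := rfl
      _ ≤ 2 ^ m2 := Nat.pow_le_pow_right (by norm_num) (by omega)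
    push_cast [h2m]
    norm_num
  set N := (2 ^ m2 - 2 : ℕ) ^ k2 with hN
  have hNR : (N : R) = 0 := by
    rw [hN, Nat.cast_pow, ← hcast, hk2]
  have hNpos : N ≠ 0 := by
    have h4 : (4:ℕ) ≤ 2 ^ m2 := by
      calc (4:ℕ) = 2 ^ 2 := rfl
      _ ≤ 2 ^ m2 := Nat.pow_le_pow_right (by norm_num) hm2
    exact pow_ne_zero _ (by omega)
  set q := ringChar R with hqdef
  haveI : CharP R q := ringChar.charP R
  have hqN : q ∣ N := (CharP.cast_eq_zero_iff R q N).mp hNR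
  have hq0 : q ≠ 0 := by
    rintro h; rw [h] at hqN; exact hNpos (zero_dvd_iff.mp hqN)
  have hq1 : q ≠ 1 := by
    intro h
    have h0 : ((q : ℕ) : R) = 0 := CharP.cast_eq_zero R q
    rw [h] at h0; simp at h0
  haveI : NeZero q := ⟨hq0⟩
  haveI : Fact (1 < q) := ⟨by omega⟩
  letI : Algebra (ZMod q) R := ZMod.algebra R q
  intro x
  obtain ⟨m, hm, hv⟩ := hpot x
  obtain ⟨k, hk⟩ := hJnil _ hv
  have hk0 : k ≠ 0 := by
    rintro rfl
    rw [pow_zero] at hk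
    exact one_ne_zero hk
  set p : Polynomial (ZMod q) := (Polynomial.X ^ m - Polynomial.X) ^ k with hp
  have hmonic : p.Monic := by
    have h1 : (Polynomial.X : Polynomial (ZMod q)).degree < (m : ℕ) := by
      rw [Polynomial.degree_X]
      exact_mod_cast (by omega : 1 < m)
    have := (Polynomial.monic_X_pow_sub h1).pow k
    rwa [← hp] at this
  have hpx : Polynomial.aeval x p = 0 := by
    rw [hp]
    simp only [map_pow, map_sub, Polynomial.aeval_X]
    exact hk
  have hp1 : p ≠ 1 := by
    intro h
    rw [h, map_one] at hpx
    exact one_ne_zero hpx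
  set D := p.natDegree with hD
  set M := Submodule.span (ZMod q) (Set.range fun i : Fin D => x ^ (i : ℕ)) with hM
  have hmem : ∀ j : ℕ, x ^ j ∈ M := by
    intro j
    have hdiv := Polynomial.modByMonic_add_div (Polynomial.X ^ j) p
    have hxj : Polynomial.aeval x ((Polynomial.X ^ j) %ₘ p) = x ^ j := by
      conv_rhs => rw [show (x : R) ^ j
        = Polynomial.aeval x (Polynomial.X ^ j : Polynomial (ZMod q)) by simp, ← hdiv]
      rw [map_add, map_mul, hpx, zero_mul, add_zero]
    rw [← hxj]
    have hdeg : ((Polynomial.X ^ j) %ₘ p).natDegree < D :=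
      Polynomial.natDegree_modByMonic_lt _ hmonic hp1
    rw [Polynomial.aeval_eq_sum_range' hdeg]
    refine Submodule.sum_mem _ fun i hi => Submodule.smul_mem _ _ ?_
    exact Submodule.subset_span ⟨⟨i, Finset.mem_range.mp hi⟩, rfl⟩
  haveI : Module.Finite (ZMod q) M := Module.Finite.span_of_finite _ (Set.finite_range _)
  haveI : Finite M := Module.finite_of_finite (ZMod q)
  obtain ⟨a, b, hab, he⟩ :=
    Finite.exists_ne_map_eq_of_infinite (fun j : ℕ => (⟨x ^ (j + 1), hmem _⟩ : M))
  have he' : x ^ (a + 1) = x ^ (b + 1) := congrArg Subtype.val he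
  rcases lt_or_gt_of_ne hab with h | h
  · exact ⟨b + 1, a + 1, Nat.succ_pos _, by omega, he'.symm⟩
  · exact ⟨a + 1, b + 1, Nat.succ_pos _, by omega, he'⟩

lemma myNilMemJacobson
    (hpot : ∀ x : R, ∃ m : ℕ, 2 ≤ m ∧ x ^ m - x ∈ Ideal.jacobson (⊥ : Ideal R))
    {x : R} (hx : IsNilpotent x) : x ∈ Ideal.jacobson (⊥ : Ideal R) := by
  obtain ⟨k, hk⟩ := hx
  obtain ⟨m, hm, hv⟩ := hpot x
  have hstep : ∀ j : ℕ, x ^ (m ^ j) - x ∈ Ideal.jacobson (⊥ : Ideal R) := by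
    intro j
    induction j with
    | zero => simpa using zero_mem _
    | succ j ih =>
      set w := x ^ (m ^ j) - x with hw
      have hcw : Commute x w := by
        rw [hw]
        exact ((Commute.refl x).pow_right _).sub_right (Commute.refl x)
      have hxw : x + w = x ^ (m ^ j) := by rw [hw]; abel
      have hpow : x ^ (m ^ (j + 1)) = (x + w) ^ m := by
        rw [hxw, ← pow_mul, pow_succ]
      have hsplit : (x + w) ^ m
          = (∑ i ∈ Finset.range m, x ^ i * w ^ (m - i) * (m.choose i : R)) + x ^ m := by
        rw [hcw.add_pow, Finset.sum_range_succ]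
        simp
      have hsum : (∑ i ∈ Finset.range m, x ^ i * w ^ (m - i) * (m.choose i : R))
          ∈ Ideal.jacobson (⊥ : Ideal R) := by
        refine Submodule.sum_mem _ fun i hi => ?_
        have hmi : m - i = (m - i - 1) + 1 := by
          have := Finset.mem_range.mp hi; omega
        have heq : x ^ i * w ^ (m - i) * (m.choose i : R)
            = (x ^ i * w ^ (m - i - 1)) * w * (m.choose i : R) := by
          rw [hmi]; noncomm_ring
        rw [heq]
        exact myMulRightMem (Ideal.mul_mem_left _ _ ih) _
      have hfin : x ^ (m ^ (j + 1)) - x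
          = (∑ i ∈ Finset.range m, x ^ i * w ^ (m - i) * (m.choose i : R)) + (x ^ m - x) := by
        rw [hpow, hsplit]; abel
      rw [hfin]
      exact add_mem hsum hv
  have hkm : k ≤ m ^ k := by
    calc k ≤ 2 ^ k := (Nat.lt_two_pow_self (n := k)).le
    _ ≤ m ^ k := Nat.pow_le_pow_left hm k
  have hxp : x ^ (m ^ k) = 0 := by
    rw [show m ^ k = k + (m ^ k - k) by omega, pow_add, hk, zero_mul]
  have h2 := hstep k
  rw [hxp, zero_sub] at h2
  simpa using neg_mem h2

end JacobsonHelpers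

/-- A ring `R` is *periodic* if for every `x ∈ R` there exist positive integers
`m > n` with `x ^ m = x ^ n`. -/
def IsPeriodicRing (R : Type*) [Ring R] : Prop :=
  ∀ x : R, ∃ m n : ℕ, 0 < n ∧ n < m ∧ x ^ m = x ^ n

/-- For a ring `R`, the Jacobson radical `J(R)` is nil and `R/J(R)` is potent
(`x ^ m - x ∈ J(R)` for some `m ≥ 2`, for every `x`) if and only if `R` is a
periodic NI ring (the set of nilpotent elements forms a two-sided ideal). -/
theorem jacobson_nil_and_quotient_potent_iff_periodic_NI (R : Type*) [Ring R] :
    ((∀ x ∈ Ideal.jacobson (⊥ : Ideal R), IsNilpotent x) ∧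
      (∀ x : R, ∃ m : ℕ, 2 ≤ m ∧ x ^ m - x ∈ Ideal.jacobson (⊥ : Ideal R))) ↔
    (IsPeriodicRing R ∧ ∃ I : TwoSidedIdeal R, ∀ x : R, x ∈ I ↔ IsNilpotent x) := by
  constructor
  · rintro ⟨hJnil, hpot⟩
    constructor
    · rcases subsingleton_or_nontrivial R with h | h
      · intro x
        exact ⟨2, 1, one_pos, one_lt_two, Subsingleton.elim _ _⟩
      · exact myPeriodic hJnil hpot
    · refine ⟨TwoSidedIdeal.mk' ((Ideal.jacobson (⊥ : Ideal R) : Ideal R) : Set R)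
        (by simp only [SetLike.mem_coe]; exact zero_mem _)
        (fun hx hy => by simp only [SetLike.mem_coe] at *; exact add_mem hx hy)
        (fun hx => by simp only [SetLike.mem_coe] at *; exact neg_mem hx)
        (fun hy => by simp only [SetLike.mem_coe] at *; exact Ideal.mul_mem_left _ _ hy)
        (fun hx => by simp only [SetLike.mem_coe] at *; exact myMulRightMem hx _),
        fun x => ?_⟩
      rw [TwoSidedIdeal.mem_mk']
      simp only [SetLike.mem_coe]
      exact ⟨fun hx => hJnil x hx, fun hx => myNilMemJacobson hpot hx⟩
  · rintro ⟨hper, I, hI⟩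
    constructor
    · intro x hx
      obtain ⟨mm, nn, hnn, hlt, hx'⟩ := hper x
      have hs : x ^ (nn + (mm - nn)) = x ^ nn := by
        rw [show nn + (mm - nn) = mm by omega]; exact hx'
      have hu : x ^ (mm - nn) ∈ Ideal.jacobson (⊥ : Ideal R) := by
        have heq : x ^ (mm - nn) = x ^ (mm - nn - 1) * x := by
          rw [← pow_succ, show (mm - nn - 1) + 1 = mm - nn by omega]
        rw [heq]
        exact Ideal.mul_mem_left _ _ hx
      have hunit : IsUnit (1 - x ^ (mm - nn)) := by
        have := myIsUnitOneAdd (neg_mem hu)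
        rwa [← sub_eq_add_neg] at this
      have hzero : x ^ nn * (1 - x ^ (mm - nn)) = 0 := by
        rw [mul_sub, mul_one, ← pow_add, hs, sub_self]
      obtain ⟨u, hu'⟩ := hunit
      refine ⟨nn, ?_⟩
      have h0 : x ^ nn * ↑u = 0 := by rw [hu']; exact hzero
      calc x ^ nn = x ^ nn * ↑u * ↑u⁻¹ := by rw [mul_assoc, u.mul_inv, mul_one]
      _ = 0 := by rw [h0, zero_mul]
    · intro x
      obtain ⟨mm, nn, hnn, hlt, hx'⟩ := hper x
      have hs : x ^ (nn + (mm - nn)) = x ^ nn := by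
        rw [show nn + (mm - nn) = mm by omega]; exact hx'
      have hnil : IsNilpotent (x ^ ((mm - nn) + 1) - x) := myKeyNilpotent hnn hs
      refine ⟨(mm - nn) + 1, by omega, ?_⟩
      refine myMemJacobsonIff.mpr fun r => ?_
      have hrnil : IsNilpotent (r * (x ^ ((mm - nn) + 1) - x)) :=
        (hI _).mp (I.mul_mem_left r _ ((hI _).mpr hnil))
      exact hrnil.isUnit_one_add
end

section
/- Let R be a ring and n a positive integer. Then R is periodic if and only if for every upper triangular matrix A ∈ Mₙ(R) (i.e., A i j = 0 whenever j < i) there exist positive integers k > l with A^k = A^l. (Since products of upper triangular matrices are upper triangular, this says precisely that the upper triangular matrix ring Tₙ(R) is periodic if and only if R is periodic.) -/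
/-- Eventually periodic sequence. -/
def EvP {α : Type*} (u : ℕ → α) : Prop :=
  ∃ N P : ℕ, 0 < P ∧ ∀ k ≥ N, u (k + P) = u k

lemma evp_pump {α : Type*} {u : ℕ → α} {N P : ℕ} (h : ∀ k ≥ N, u (k + P) = u k) :
    ∀ t : ℕ, ∀ k ≥ N, u (k + t * P) = u k := by
  intro t
  induction t with
  | zero => simp
  | succ t ih =>
    intro k hk
    have e : k + (t + 1) * P = (k + t * P) + P := by ring
    rw [e, h _ (le_trans hk (Nat.le_add_right _ _)), ih k hk]

/-- common threshold/period for a finite family -/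
lemma evp_family {ι α : Type*} (s : Finset ι) (u : ι → ℕ → α)
    (h : ∀ i ∈ s, EvP (u i)) :
    ∃ N P : ℕ, 0 < P ∧ ∀ i ∈ s, ∀ k ≥ N, u i (k + P) = u i k := by
  classical
  induction s using Finset.induction_on with
  | empty => exact ⟨0, 1, Nat.one_pos, by simp⟩
  | @insert a s ha ih =>
    obtain ⟨N, P, hP, hNP⟩ := ih (fun i hi => h i (Finset.mem_insert_of_mem hi))
    obtain ⟨N', P', hP', hNP'⟩ := h a (Finset.mem_insert_self a s)
    refine ⟨max N N', P * P', mul_pos hP hP', ?_⟩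
    intro i hi k hk
    rcases Finset.mem_insert.mp hi with rfl | hi
    · exact evp_pump hNP' P k (le_trans (le_max_right N N') hk)
    · rw [mul_comm P P']
      exact evp_pump (hNP i hi) P' k (le_trans (le_max_left N N') hk)

lemma evp_sum {ι : Type*} {α : Type*} [AddCommMonoid α] (s : Finset ι) (u : ι → ℕ → α)
    (h : ∀ i ∈ s, EvP (u i)) : EvP (fun k => ∑ i ∈ s, u i k) := by
  obtain ⟨N, P, hP, hNP⟩ := evp_family s u h
  exact ⟨N, P, hP, fun k hk => Finset.sum_congr rfl fun i hi => hNP i hi k hk⟩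

lemma evp_pow_of_periodic {R : Type*} [Ring R] (d : R)
    (h : ∃ m n : ℕ, 0 < n ∧ n < m ∧ d ^ m = d ^ n) : EvP (fun k => d ^ k) := by
  obtain ⟨m, n, hn, hnm, he⟩ := h
  refine ⟨n, m - n, by omega, fun k hk => ?_⟩
  show d ^ (k + (m - n)) = d ^ k
  have e1 : k + (m - n) = (k - n) + m := by omega
  have e2 : k = (k - n) + n := by omega
  rw [e1, pow_add, he]
  conv_rhs => rw [e2]
  rw [pow_add]

/-- Key lemma: in a ring of positive characteristic, a solution of a linear
recursion `u (k+1) = d * u k + g k` with `d^·` and `g` eventually periodic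
is eventually periodic. -/
lemma evp_rec {R : Type*} [Ring R] (c : ℕ) (hc : 0 < c) (hcR : (c : R) = 0)
    (d : R) (hd : EvP (fun k => d ^ k)) {g u : ℕ → R} (hg : EvP g)
    (hu : ∀ k, u (k + 1) = d * u k + g k) : EvP u := by
  obtain ⟨N, P, hP, hdp'⟩ := hd
  have hdp : ∀ k ≥ N, d ^ (k + P) = d ^ k := hdp'
  obtain ⟨N', P', hP', hgp⟩ := hg
  set L := P * P' with hLdef
  have hL : 0 < L := mul_pos hP hP'
  set M := max N N' with hMdef
  set w := fun k => u (k + L) - u k with hwdef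
  have hgL : ∀ k ≥ N', g (k + L) = g k := by
    intro k hk
    have h1 := evp_pump hgp P k hk
    have e : k + L = k + P * P' := by rw [hLdef]
    rw [e]; exact h1
  have hdL : ∀ k ≥ N, ∀ s : ℕ, d ^ (k + s * L) = d ^ k := by
    intro k hk s
    have h1 := evp_pump hdp (s * P') k hk
    have e : k + s * L = k + s * P' * P := by rw [hLdef]; ring
    rw [e]; exact h1
  have hw : ∀ k ≥ M, w (k + 1) = d * w k := by
    intro k hk
    have e1 : k + 1 + L = (k + L) + 1 := by ring
    simp only [hwdef, e1, hu, hgL k (le_trans (le_max_right N N') hk)]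
    noncomm_ring
  have hwj : ∀ j : ℕ, w (M + j) = d ^ j * w M := by
    intro j
    induction j with
    | zero => simp
    | succ j ih =>
      have e : M + (j + 1) = (M + j) + 1 := by ring
      rw [e, hw (M + j) (Nat.le_add_right _ _), ih, ← mul_assoc, ← pow_succ']
  have main : ∀ s : ℕ, ∀ i ≥ N, u (M + i + s * L) = u (M + i) + s • (d ^ i * w M) := by
    intro s
    induction s with
    | zero => simp
    | succ s ih =>
      intro i hi
      have e : M + i + (s + 1) * L = (M + i + s * L) + L := by ring
      have hwval : u ((M + i + s * L) + L) = u (M + i + s * L) + w (M + i + s * L) := by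
        simp [hwdef]
      have e2 : M + i + s * L = M + (i + s * L) := by ring
      rw [e, hwval, ih i hi, e2, hwj (i + s * L), hdL i hi s, succ_nsmul]
      ring_nf
      abel
  refine ⟨M + N, c * L, mul_pos hc hL, fun k hk => ?_⟩
  have e : k = M + (k - M) := by omega
  have hiN : k - M ≥ N := by omega
  have e2 : k + c * L = M + (k - M) + c * L := by omega
  rw [e2, main c (k - M) hiN, nsmul_eq_mul, hcR]
  simp [← e]

lemma evp_matrix {R : Type*} [Ring R] {n : ℕ} {u : ℕ → Matrix (Fin n) (Fin n) R}
    (h : ∀ i j : Fin n, EvP (fun k => u k i j)) : EvP u := by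
  obtain ⟨N, P, hP, hNP⟩ := evp_family (Finset.univ : Finset (Fin n × Fin n))
    (fun p k => u k p.1 p.2) (fun p _ => h p.1 p.2)
  refine ⟨N, P, hP, fun k hk => ?_⟩
  ext i j
  exact hNP (i, j) (Finset.mem_univ _) k hk

/-- The upper triangular matrix ring `Tₙ(R)` is periodic if and only if `R` is
periodic: `R` is periodic iff every upper triangular `n × n` matrix `A` over `R`
satisfies `A ^ k = A ^ l` for some positive integers `k > l`. -/
theorem periodic_iff_triangular_matrices_periodic (R : Type*) [Ring R]
    (n : ℕ) (hn : 0 < n) :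
    IsPeriodicRing R ↔
      ∀ A : Matrix (Fin n) (Fin n) R, (∀ i j : Fin n, j < i → A i j = 0) →
        ∃ k l : ℕ, 0 < l ∧ l < k ∧ A ^ k = A ^ l := by
  classical
  constructor
  · intro hR A hA
    -- positive characteristic
    obtain ⟨m₀, n₀, hn₀, hm₀, he₀⟩ := hR (2 : R)
    have hle : (2:ℕ) ^ n₀ ≤ 2 ^ m₀ := Nat.pow_le_pow_right (by norm_num) hm₀.le
    have hchar : ((2 ^ m₀ - 2 ^ n₀ : ℕ) : R) = 0 := by
      rw [Nat.cast_sub hle]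
      push_cast
      rw [sub_eq_zero]
      exact_mod_cast he₀
    set c : ℕ := 2 ^ m₀ - 2 ^ n₀ with hcdef
    have hc : 0 < c := by
      have : (2:ℕ) ^ n₀ < 2 ^ m₀ := Nat.pow_lt_pow_right (by norm_num) hm₀
      omega
    -- each entry sequence is eventually periodic, by downward induction on the row
    have main : ∀ m : ℕ, ∀ i : Fin n, n - i.val ≤ m → ∀ j : Fin n,
        EvP (fun k => (A ^ k) i j) := by
      intro m
      induction m with
      | zero => intro i hi; exact absurd hi (by have := i.isLt; omega)
      | succ m ih =>
        intro i hi j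
        have hrec : ∀ k, (A ^ (k + 1)) i j =
            A i i * (A ^ k) i j
              + ∑ t ∈ Finset.univ.filter (fun t => i < t), A i t * (A ^ k) t j := by
          intro k
          rw [pow_succ', Matrix.mul_apply]
          have h1 : (∑ t : Fin n, A i t * (A ^ k) t j) =
              ∑ t ∈ Finset.univ.filter (fun t => i ≤ t), A i t * (A ^ k) t j := by
            refine (Finset.sum_subset (Finset.filter_subset _ _) ?_).symm
            intro t _ ht
            have : t < i := by
              simp only [Finset.mem_filter, Finset.mem_univ, true_and] at ht
              exact lt_of_not_ge ht
            rw [hA i t this, zero_mul]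
          have h2 : Finset.univ.filter (fun t => i ≤ t) =
              insert i (Finset.univ.filter (fun t => i < t)) := by
            ext t
            simp only [Finset.mem_filter, Finset.mem_univ, true_and, Finset.mem_insert]
            constructor
            · intro h; rcases eq_or_lt_of_le h with h | h
              · exact Or.inl h.symm
              · exact Or.inr h
            · rintro (rfl | h)
              · exact le_refl _
              · exact h.le
          rw [h1, h2, Finset.sum_insert (by simp)]
        refine evp_rec c hc hchar (A i i) (evp_pow_of_periodic _ (hR (A i i)))
          (g := fun k => ∑ t ∈ Finset.univ.filter (fun t => i < t), A i t * (A ^ k) t j)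
          ?_ hrec
        apply evp_sum
        intro t ht
        simp only [Finset.mem_filter, Finset.mem_univ, true_and] at ht
        have ht' : n - t.val ≤ m := by
          have := t.isLt
          have hit : i.val < t.val := ht
          omega
        obtain ⟨N, P, hP, hNP⟩ := ih t ht' j
        refine ⟨N, P, hP, fun k hk => ?_⟩
        have h2 : (A ^ (k + P)) t j = (A ^ k) t j := hNP k hk
        show A i t * (A ^ (k + P)) t j = A i t * (A ^ k) t j
        rw [h2]
    have hEvP : EvP (fun k => A ^ k) :=
      evp_matrix (fun i j => main n i (by omega) j)
    obtain ⟨N, P, hP, hNP⟩ := hEvP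
    exact ⟨N + 1 + P, N + 1, by omega, by omega, by
      have := hNP (N + 1) (by omega)
      simpa [Nat.add_comm] using this⟩
  · intro h x
    obtain ⟨k, l, hl, hlk, he⟩ := h (Matrix.diagonal (fun _ => x)) (by
      intro i j hij
      exact Matrix.diagonal_apply_ne' _ (ne_of_lt hij))
    refine ⟨k, l, hl, hlk, ?_⟩
    have i0 : Fin n := ⟨0, hn⟩
    have := congrFun (congrFun he i0) i0
    rwa [Matrix.diagonal_pow, Matrix.diagonal_pow, Matrix.diagonal_apply_eq,
      Matrix.diagonal_apply_eq] at this
end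

section
/- The following two statements are equivalent: (1) for every ring R which is Abelian (all idempotents central) and periodic, the matrix ring M₂(R) (Matrix (Fin 2) (Fin 2) R) is periodic; (2) for every ring R which is local (nontrivial, and for all a, b ∈ R with a + b = 1, a or b is a unit) and periodic, the matrix ring M₂(R) is periodic. -/
namespace PeriodicAux
variable {S : Type*} [Ring S]
lemma aux_step (f y : S) {n d : ℕ}
    (h : f * y ^ (n + d) = f * y ^ n) (k t : ℕ) :
    f * y ^ (n + k + t * d) = f * y ^ (n + k) := by
  induction t with
  | zero => simp
  | succ t ih =>
      calc f * y ^ (n + k + (t + 1) * d)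
          = f * (y ^ (n + d) * y ^ (k + t * d)) := by
            rw [← pow_add, show n + d + (k + t * d) = n + k + (t+1) * d by ring]
        _ = (f * y ^ (n + d)) * y ^ (k + t * d) := by rw [mul_assoc]
        _ = (f * y ^ n) * y ^ (k + t * d) := by rw [h]
        _ = f * y ^ (n + k + t * d) := by
            rw [mul_assoc, ← pow_add, show n + (k + t * d) = n + k + t * d by ring]
        _ = f * y ^ (n + k) := ih

lemma combine (y f : S) {m1 n1 m2 n2 : ℕ}
    (hn1 : 0 < n1) (hm1 : n1 < m1) (hn2 : 0 < n2) (hm2 : n2 < m2)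
    (e1 : (1 - f) * y ^ m1 = (1 - f) * y ^ n1) (e2 : f * y ^ m2 = f * y ^ n2) :
    ∃ M N : ℕ, 0 < N ∧ N < M ∧ y ^ M = y ^ N := by
  obtain ⟨d1, hd1, rfl⟩ : ∃ d, 0 < d ∧ m1 = n1 + d := ⟨m1 - n1, by omega, by omega⟩
  obtain ⟨d2, hd2, rfl⟩ : ∃ d, 0 < d ∧ m2 = n2 + d := ⟨m2 - n2, by omega, by omega⟩
  set N := max n1 n2 with hN
  have A := aux_step (1 - f) y e1 (N - n1) d2
  have B := aux_step f y e2 (N - n2) d1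
  rw [show n1 + (N - n1) = N by omega, Nat.mul_comm d2 d1] at A
  rw [show n2 + (N - n2) = N by omega] at B
  have key : y ^ (N + d1 * d2) = y ^ N := by
    rw [sub_mul, sub_mul, one_mul, one_mul, B] at A
    have h4 := congrArg (fun z => z + f * y ^ N) A
    simpa using h4
  exact ⟨N + d1 * d2, N, lt_of_lt_of_le hn1 (le_max_left _ _),
    Nat.lt_add_of_pos_right (Nat.mul_pos hd1 hd2), key⟩

lemma pow_idem (a : S) {m n : ℕ} (hn : 0 < n) (hm : n < m)
    (h : a ^ m = a ^ n) :
    0 < n * (m - n) ∧ a ^ (n * (m - n)) * a ^ (n * (m - n)) = a ^ (n * (m - n)) := by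
  obtain ⟨d, hd, rfl⟩ : ∃ d, 0 < d ∧ m = n + d := ⟨m - n, by omega, by omega⟩
  rw [show n + d - n = d by omega]
  have h' : (1 : S) * a ^ (n + d) = 1 * a ^ n := by rw [one_mul, one_mul, h]
  have hnd : n ≤ n * d := Nat.le_mul_of_pos_right n hd
  have key := aux_step (1 : S) a h' (n * d - n) n
  rw [show n + (n * d - n) = n * d by omega] at key
  rw [one_mul, one_mul, pow_add] at key
  exact ⟨Nat.mul_pos hn hd, key⟩

/-- Shrinking a congruence with a central idempotent. -/
def shrinkCon {R : Type*} [Ring R] (c : RingCon R) (u : R)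
    (hcen : ∀ z : R, u * z = z * u) (hid : u * u = u) : RingCon R where
  r a b := c (u * a) (u * b)
  iseqv := ⟨fun a => c.refl _, fun h => c.symm h, fun h1 h2 => c.trans h1 h2⟩
  add' {w z y t} h1 h2 := by
    show c (u * (w + y)) (u * (z + t))
    rw [mul_add, mul_add]; exact c.add h1 h2
  mul' {w z y t} h1 h2 := by
    have key : ∀ a b : R, u * (a * b) = (u * a) * (u * b) := by
      intro a b
      calc u * (a * b) = ((u * u) * a) * b := by rw [hid, mul_assoc]
        _ = (u * (u * a)) * b := by rw [mul_assoc u u a]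
        _ = ((u * a) * u) * b := by rw [hcen (u * a)]
        _ = (u * a) * (u * b) := by rw [mul_assoc, mul_assoc]
    show c (u * (w * y)) (u * (z * t))
    rw [key, key]; exact c.mul h1 h2

/-- Union of a nonempty chain of ring congruences. -/
def chainUnion {R : Type*} [Ring R] (ch : Set (RingCon R)) (hch : IsChain (· ≤ ·) ch)
    (y0 : RingCon R) (hy0 : y0 ∈ ch) : RingCon R where
  r a b := ∃ d ∈ ch, d a b
  iseqv := by
    refine ⟨fun a => ⟨y0, hy0, y0.refl a⟩, ?_, ?_⟩
    · rintro a b ⟨d, hd, h⟩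
      exact ⟨d, hd, d.symm h⟩
    · rintro a b e ⟨d1, hd1, h1⟩ ⟨d2, hd2, h2⟩
      rcases hch.total hd1 hd2 with hle | hle
      exacts [⟨d2, hd2, d2.trans (hle h1) h2⟩, ⟨d1, hd1, d1.trans h1 (hle h2)⟩]
  add' := by
    rintro w z y t ⟨d1, hd1, h1⟩ ⟨d2, hd2, h2⟩
    rcases hch.total hd1 hd2 with hle | hle
    exacts [⟨d2, hd2, d2.add (hle h1) h2⟩, ⟨d1, hd1, d1.add h1 (hle h2)⟩]
  mul' := by
    rintro w z y t ⟨d1, hd1, h1⟩ ⟨d2, hd2, h2⟩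
    rcases hch.total hd1 hd2 with hle | hle
    exacts [⟨d2, hd2, d2.mul (hle h1) h2⟩, ⟨d1, hd1, d1.mul h1 (hle h2)⟩]

/-- The equality congruence. -/
def eqCon (R : Type*) [Ring R] : RingCon R where
  r a b := a = b
  iseqv := eq_equivalence
  add' h1 h2 := by rw [h1, h2]
  mul' h1 h2 := by rw [h1, h2]

end PeriodicAux

open PeriodicAux in
/-- The statement "for every Abelian (all idempotents central) periodic ring `R`,
`M₂(R)` is periodic" is equivalent to the statement "for every local periodic ring
`R`, `M₂(R)` is periodic". -/
theorem abelian_matrix_periodic_iff_local_matrix_periodic :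
    (∀ (R : Type) [Ring R], (∀ e : R, e * e = e → ∀ x : R, e * x = x * e) →
        IsPeriodicRing R → IsPeriodicRing (Matrix (Fin 2) (Fin 2) R)) ↔
    (∀ (R : Type) [Ring R], IsLocalRing R →
        IsPeriodicRing R → IsPeriodicRing (Matrix (Fin 2) (Fin 2) R)) := by
  constructor
  · -- a local ring is Abelian
    intro h1 R _ hloc hper
    refine h1 R ?_ hper
    intro e he z
    haveI := hloc
    have hsum : e + (1 - e) = 1 := by abel
    rcases IsLocalRing.isUnit_or_isUnit_of_add_one hsum with hu | hu
    · have he1 : e = 1 := hu.mul_left_cancel (by rw [he, mul_one])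
      rw [he1, one_mul, mul_one]
    · have hidem : (1 - e) * (1 - e) = 1 - e := by
        rw [sub_mul, one_mul, mul_sub, mul_one, he]; abel
      have h1e : (1 - e) = 1 := hu.mul_left_cancel (by rw [hidem, mul_one])
      have he0 : e = 0 := by rwa [sub_eq_self] at h1e
      rw [he0, zero_mul, mul_zero]
  · intro h2 R _ habel hper x
    by_contra hx
    -- "Bad c" means x becomes periodic modulo c
    set Bad : RingCon R → Prop := fun c =>
      ∃ m n : ℕ, 0 < n ∧ n < m ∧ ∀ i j, c ((x ^ m) i j) ((x ^ n) i j) with hBadDef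
    have heq : ¬ Bad (eqCon R) := by
      rintro ⟨m, n, hn, hm, hrel⟩
      exact hx ⟨m, n, hn, hm, by ext i j; exact hrel i j⟩
    have hub : ∀ ch ⊆ {c : RingCon R | ¬ Bad c}, IsChain (· ≤ ·) ch →
        ∀ y ∈ ch, ∃ ub ∈ {c : RingCon R | ¬ Bad c}, ∀ z ∈ ch, z ≤ ub := by
      intro ch hchS hch y0 hy0
      refine ⟨chainUnion ch hch y0 hy0, ?_, fun z hz a b hab => ⟨z, hz, hab⟩⟩
      rintro ⟨m, n, hn, hm, hrel⟩
      obtain ⟨d00, hc00, h00⟩ := hrel 0 0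
      obtain ⟨d01, hc01, h01⟩ := hrel 0 1
      obtain ⟨d10, hc10, h10⟩ := hrel 1 0
      obtain ⟨d11, hc11, h11⟩ := hrel 1 1
      have pair : ∀ d1, d1 ∈ ch → ∀ d2, d2 ∈ ch → ∃ d ∈ ch, d1 ≤ d ∧ d2 ≤ d := by
        intro d1 h1 d2 h2
        rcases hch.total h1 h2 with hle | hle
        exacts [⟨d2, h2, hle, le_refl _⟩, ⟨d1, h1, le_refl _, hle⟩]
      obtain ⟨da, hda, hda1, hda2⟩ := pair d00 hc00 d01 hc01
      obtain ⟨db, hdb, hdb1, hdb2⟩ := pair d10 hc10 d11 hc11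
      obtain ⟨d, hd, hd1, hd2⟩ := pair da hda db hdb
      refine hchS hd ⟨m, n, hn, hm, ?_⟩
      intro i j
      fin_cases i <;> fin_cases j
      · exact hd1 (hda1 h00)
      · exact hd1 (hda2 h01)
      · exact hd2 (hdb1 h10)
      · exact hd2 (hdb2 h11)
    obtain ⟨c, -, hcS, hcmax⟩ :=
      zorn_le_nonempty₀ {c : RingCon R | ¬ Bad c} hub (eqCon R) heq
    -- notation for the quotient
    set Qu := c.Quotient with hQu
    -- key fact: central idempotents die in the quotient
    have keyIdem : ∀ e : R, e * e = e → c e 0 ∨ c (1 - e) 0 := by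
      intro e he
      by_contra hcon
      push_neg at hcon
      obtain ⟨hne, hne'⟩ := hcon
      have hcen := habel e he
      have hcen' : ∀ z : R, (1 - e) * z = z * (1 - e) := by
        intro z
        rw [sub_mul, one_mul, mul_sub, mul_one, hcen z]
      have hid' : (1 - e) * (1 - e) = 1 - e := by
        rw [sub_mul, one_mul, mul_sub, mul_one, he]; abel
      -- first extension: kills e
      have hB1 : Bad (shrinkCon c (1 - e) hcen' hid') := by
        by_contra hS1
        have hle : c ≤ shrinkCon c (1 - e) hcen' hid' := by
          intro a b hab
          exact c.mul (c.refl (1 - e)) hab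
        have := hcmax hS1 hle
        refine hne ?_
        have he0 : (shrinkCon c (1 - e) hcen' hid') e 0 := by
          show c ((1 - e) * e) ((1 - e) * 0)
          rw [sub_mul, one_mul, he, sub_self, mul_zero]
          exact c.refl 0
        exact this he0
      have hB2 : Bad (shrinkCon c e hcen he) := by
        by_contra hS2
        have hle : c ≤ shrinkCon c e hcen he := by
          intro a b hab
          exact c.mul (c.refl e) hab
        have := hcmax hS2 hle
        refine hne' ?_
        have he0 : (shrinkCon c e hcen he) (1 - e) 0 := by
          show c (e * (1 - e)) (e * 0)
          rw [mul_sub, mul_one, he, sub_self, mul_zero]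
          exact c.refl 0
        exact this he0
      obtain ⟨m1, n1, hn1, hm1, hrel1⟩ := hB1
      obtain ⟨m2, n2, hn2, hm2, hrel2⟩ := hB2
      -- move to the quotient matrix ring
      set π : R →+* Qu := c.mk' with hπ
      set y : Matrix (Fin 2) (Fin 2) Qu := (x.map π) with hy
      have hyk : ∀ k : ℕ, y ^ k = (x ^ k).map π := by
        intro k
        rw [hy, ← RingHom.mapMatrix_apply, ← map_pow, RingHom.mapMatrix_apply]
      set f : Matrix (Fin 2) (Fin 2) Qu := (e : Qu) • (1 : Matrix (Fin 2) (Fin 2) Qu) with hf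
      have hsubf : (1 : Matrix (Fin 2) (Fin 2) Qu) - f = ((1 - e : R) : Qu) • 1 := by
        have : ((1 - e : R) : Qu) = 1 - (e : Qu) := by
          rw [show ((1 - e : R) : Qu) = π (1 - e) from rfl, map_sub, map_one]; rfl
        rw [this, sub_smul, one_smul, hf]
      have smulentry : ∀ (g : R) (A : Matrix (Fin 2) (Fin 2) Qu) (i j : Fin 2),
          (((g : Qu) • (1 : Matrix (Fin 2) (Fin 2) Qu)) * A) i j = (g : Qu) * A i j := by
        intro g A i j
        rw [Matrix.smul_mul, one_mul, Matrix.smul_apply, smul_eq_mul]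
      have E1 : (1 - f) * y ^ m1 = (1 - f) * y ^ n1 := by
        ext i j
        rw [hsubf, smulentry, smulentry, hyk, hyk, Matrix.map_apply, Matrix.map_apply]
        show ((1 - e : R) : Qu) * ((x ^ m1) i j : Qu) = ((1 - e : R) : Qu) * ((x ^ n1) i j : Qu)
        rw [← RingCon.coe_mul, ← RingCon.coe_mul]
        exact c.eq.mpr (hrel1 i j)
      have E2 : f * y ^ m2 = f * y ^ n2 := by
        ext i j
        rw [hf, smulentry, smulentry, hyk, hyk, Matrix.map_apply, Matrix.map_apply]
        show ((e : R) : Qu) * ((x ^ m2) i j : Qu) = ((e : R) : Qu) * ((x ^ n2) i j : Qu)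
        rw [← RingCon.coe_mul, ← RingCon.coe_mul]
        exact c.eq.mpr (hrel2 i j)
      obtain ⟨M, N, hN, hM, hMN⟩ := combine y f hn1 hm1 hn2 hm2 E1 E2
      refine hcS ⟨M, N, hN, hM, fun i j => c.eq.mp ?_⟩
      rw [hyk, hyk] at hMN
      have := Matrix.ext_iff.mpr hMN i j
      rw [Matrix.map_apply, Matrix.map_apply] at this
      exact this
    -- the quotient is nontrivial
    have hnontriv : Nontrivial Qu := by
      refine ⟨⟨0, 1, fun h01 => ?_⟩⟩
      have h10 : c 1 0 := c.symm (c.eq.mp h01)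
      have hall : ∀ a b : R, c a b := by
        intro a b
        have ha : c a 0 := by
          have := c.mul (c.refl a) h10
          rwa [mul_one, mul_zero] at this
        have hb : c b 0 := by
          have := c.mul (c.refl b) h10
          rwa [mul_one, mul_zero] at this
        exact c.trans ha (c.symm hb)
      exact hcS ⟨2, 1, one_pos, one_lt_two, fun i j => hall _ _⟩
    -- every element of the quotient is nilpotent or a unit
    have hnilunit : ∀ a : Qu, IsNilpotent a ∨ IsUnit a := by
      intro a
      obtain ⟨r, rfl⟩ : ∃ r : R, (r : Qu) = a := Quot.exists_rep a
      obtain ⟨m, n, hn, hm, hr⟩ := hper r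
      obtain ⟨hpos, hidem⟩ := pow_idem r hn hm hr
      rcases keyIdem _ hidem with h0 | h1
      · left
        refine ⟨n * (m - n), ?_⟩
        rw [← RingCon.coe_pow]
        exact c.eq.mpr h0
      · right
        have : ((r : Qu)) ^ (n * (m - n)) = 1 := by
          have h1e : ((1 - r ^ (n * (m - n)) : R) : Qu) = 0 := c.eq.mpr h1
          have : (1 : Qu) - ((r ^ (n * (m - n)) : R) : Qu) = 0 := by
            rw [← h1e, show ((1 - r ^ (n * (m - n)) : R) : Qu) = c.mk' (1 - r ^ (n * (m-n))) from rfl,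
              map_sub, map_one]; rfl
          rw [← RingCon.coe_pow]
          have := sub_eq_zero.mp this
          exact this.symm
        exact IsUnit.of_pow_eq_one this (by positivity)
    haveI hlocQ : IsLocalRing Qu := by
      refine ⟨?_⟩
      intro a b hab
      rcases hnilunit a with hnil | hu
      · right
        have hb : b = 1 - a := by rw [← hab]; abel
        rw [hb]
        exact hnil.isUnit_one_sub
      · exact Or.inl hu
    have hperQ : IsPeriodicRing Qu := by
      intro a
      obtain ⟨r, rfl⟩ : ∃ r : R, (r : Qu) = a := Quot.exists_rep a
      obtain ⟨m, n, hn, hm, hr⟩ := hper r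
      exact ⟨m, n, hn, hm, by rw [← RingCon.coe_pow, ← RingCon.coe_pow, hr]⟩
    obtain ⟨m, n, hn, hm, hMN⟩ := h2 Qu hlocQ hperQ (x.map c.mk')
    refine hcS ⟨m, n, hn, hm, fun i j => c.eq.mp ?_⟩
    have hyk : ∀ k : ℕ, (x.map c.mk') ^ k = (x ^ k).map c.mk' := by
      intro k
      rw [← RingHom.mapMatrix_apply, ← map_pow, RingHom.mapMatrix_apply]
    rw [hyk, hyk] at hMN
    have := Matrix.ext_iff.mpr hMN i j
    rw [Matrix.map_apply, Matrix.map_apply] at this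
    exact this
end

section
/- For a ring R, the following are equivalent: (1) for every positive integer n, the matrix ring Mₙ(R) (Matrix (Fin n) (Fin n) R) is periodic; (2) for every finitely generated R-module M, the endomorphism ring End_R(M) (Module.End R M) is periodic, i.e., for every φ : M →ₗ[R] M there exist positive integers k > l with φ^k = φ^l. -/
universe u

private lemma toLinearMapRight'_pow {R : Type u} [Ring R] {n : ℕ}
    (A : Matrix (Fin n) (Fin n) R) (k : ℕ) :
    (Matrix.toLinearMapRight' (A ^ k) : Module.End R (Fin n → R)) =
      (Matrix.toLinearMapRight' A : Module.End R (Fin n → R)) ^ k := by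
  induction k with
  | zero => simp [Matrix.toLinearMapRight'_one, Module.End.one_eq_id]
  | succ k ih =>
    rw [pow_succ, pow_succ', Matrix.toLinearMapRight'_mul, ih]
    rfl

/-- For a ring `R`, all matrix rings `Mₙ(R)` (`n ≥ 1`) are periodic if and only if
the endomorphism ring of every finitely generated right `R`-module is periodic. -/
theorem matrix_periodic_iff_end_fg_module_periodic (R : Type u) [Ring R] :
    (∀ n : ℕ, 0 < n → IsPeriodicRing (Matrix (Fin n) (Fin n) R)) ↔
    (∀ (M : Type u) [AddCommGroup M] [Module R M], Module.Finite R M →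
      ∀ φ : Module.End R M, ∃ k l : ℕ, 0 < l ∧ l < k ∧ φ ^ k = φ ^ l) := by
  constructor
  · intro h M _ _ hfg φ
    obtain ⟨n, π, hπ⟩ := Module.Finite.exists_fin' R M
    rcases Nat.eq_zero_or_pos n with hn | hn
    · subst hn
      have hsub : Subsingleton M := by
        constructor
        intro a b
        obtain ⟨x, rfl⟩ := hπ a
        obtain ⟨y, rfl⟩ := hπ b
        congr
        exact Subsingleton.elim x y
      refine ⟨2, 1, one_pos, one_lt_two, ?_⟩
      ext x
      exact Subsingleton.elim _ _
    · obtain ⟨ψ, hψ⟩ := Module.projective_lifting_property π (φ.comp π)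
        hπ
      have key : ∀ k : ℕ, (φ ^ k).comp π = π.comp (ψ ^ k) := by
        intro k
        induction k with
        | zero => ext x; simp
        | succ k ih =>
          rw [pow_succ', pow_succ']
          calc (φ.comp (φ ^ k)).comp π = φ.comp ((φ ^ k).comp π) := rfl
            _ = φ.comp (π.comp (ψ ^ k)) := by rw [ih]
            _ = (φ.comp π).comp (ψ ^ k) := rfl
            _ = (π.comp ψ).comp (ψ ^ k) := by rw [← hψ]
            _ = π.comp (ψ.comp (ψ ^ k)) := rfl
      obtain ⟨m, l, hl, hlm, hA⟩ := h n hn (LinearMap.toMatrixRight' ψ)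
      have hψml : ψ ^ m = ψ ^ l := by
        have := congrArg (Matrix.toLinearMapRight' (R := R)) hA
        rw [toLinearMapRight'_pow, toLinearMapRight'_pow] at this
        simpa using this
      refine ⟨m, l, hl, hlm, ?_⟩
      apply LinearMap.ext
      intro x
      obtain ⟨y, rfl⟩ := hπ x
      have h1 := congrFun (congrArg DFunLike.coe (key m)) y
      have h2 := congrFun (congrArg DFunLike.coe (key l)) y
      simp only [LinearMap.comp_apply] at h1 h2
      rw [h1, h2, hψml]
  · intro h n _ A
    have := h (Fin n → R) inferInstance
      (Matrix.toLinearMapRight' A : Module.End R (Fin n → R))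
    obtain ⟨k, l, hl, hlk, hφ⟩ := this
    refine ⟨k, l, hl, hlk, ?_⟩
    apply Matrix.toLinearMapRight'.injective
    rw [toLinearMapRight'_pow, toLinearMapRight'_pow]
    exact hφ
end

section
/- For an additive abelian group G, the endomorphism ring E(G) (AddMonoid.End G, with composition as multiplication) is a periodic ring if and only if G is finite. -/
universe u v

lemma nsmul_mod {α : Type*} [AddCommMonoid α] {Q : ℕ} (x : α) (hx : Q • x = 0) (m : ℕ) :
    (m % Q) • x = m • x := by
  conv_rhs => rw [← Nat.mod_add_div m Q]
  rw [add_nsmul, mul_nsmul, hx, nsmul_zero, add_zero]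

section Solve

variable {q : ℕ}

/-- Solve `d * y = s` in `ZMod q` when `(q/d) • s = 0`. -/
lemma zmod_solve (hq : q ≠ 0) {d : ℕ} (hd : d ∣ q) (s : ZMod q)
    (hs : (q / d) • s = 0) : ∃ y : ZMod q, (d : ZMod q) * y = s := by
  haveI : NeZero q := ⟨hq⟩
  have hqd0 : q / d ≠ 0 := by
    intro h
    have := Nat.div_mul_cancel hd
    rw [h, zero_mul] at this; exact hq this.symm
  have hsv : ((s.val : ZMod q)) = s := ZMod.natCast_zmod_val s
  have h1 : ((q / d * s.val : ℕ) : ZMod q) = 0 := by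
    push_cast
    rw [hsv, ← nsmul_eq_mul]
    exact hs
  have h2 : q ∣ q / d * s.val := (ZMod.natCast_eq_zero_iff _ _).mp h1
  have h3 : d * (q / d) ∣ q / d * s.val := by rwa [Nat.mul_div_cancel' hd]
  have h4 : d ∣ s.val := by
    rcases h3 with ⟨t, ht⟩
    refine ⟨t, ?_⟩
    have h5 : q / d * s.val = q / d * (d * t) := by rw [ht]; ring
    exact Nat.eq_of_mul_eq_mul_left (Nat.pos_of_ne_zero hqd0) h5
  rcases h4 with ⟨t, ht⟩
  exact ⟨(t : ZMod q), by rw [← Nat.cast_mul, ← ht, hsv]⟩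

lemma ulift_solve (hq : q ≠ 0) {d : ℕ} (hd : d ∣ q) (s : ULift.{v} (ZMod q))
    (hs : (q / d) • s = 0) : ∃ y : ULift.{v} (ZMod q), (d : ZMod q) • y = s := by
  have hdown : (q / d) • s.down = 0 := congrArg ULift.down hs
  obtain ⟨y, hy⟩ := zmod_solve hq hd s.down hdown
  refine ⟨ULift.up y, ?_⟩
  apply ULift.ext
  show (d : ZMod q) • y = s.down
  rw [smul_eq_mul, hy]

lemma dsum_solve (hq : q ≠ 0) {d : ℕ} (hd : d ∣ q) (s : Π₀ (_ : ℕ), ULift.{v} (ZMod q))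
    (hs : (q / d) • s = 0) :
    ∃ y : Π₀ (_ : ℕ), ULift.{v} (ZMod q), (d : ZMod q) • y = s := by
  classical
  have hcoord : ∀ i : ℕ, ∃ y' : ULift.{v} (ZMod q), (d : ZMod q) • y' = s i := by
    intro i
    apply ulift_solve hq hd
    have : ((q / d) • s) i = 0 := by rw [hs]; rfl
    rwa [DFinsupp.nsmul_apply] at this
  choose f hf using hcoord
  refine ⟨DFinsupp.mk s.support (fun i => f i), ?_⟩
  apply DFinsupp.ext
  intro i
  rw [DFinsupp.smul_apply, DFinsupp.mk_apply]
  split_ifs with h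
  · exact hf i
  · rw [smul_zero]
    exact (DFinsupp.notMem_support_iff.mp h).symm

end Solve

section Baer

/-- Ideals of `ZMod q` are spanned by divisors of `q`. -/
lemma ideal_zmod_span {q : ℕ} (hq : q ≠ 0) (I : Ideal (ZMod q)) :
    ∃ d : ℕ, d ∣ q ∧ I = Ideal.span {(d : ZMod q)} := by
  haveI : NeZero q := ⟨hq⟩
  let f : ℤ →+* ZMod q := Int.castRingHom (ZMod q)
  have hfsurj : Function.Surjective f := ZMod.intCast_surjective
  let J : Ideal ℤ := I.comap f
  obtain ⟨z, hz⟩ := (IsPrincipalIdealRing.principal J)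
  have hassoc : Ideal.span {z} = Ideal.span {(z.natAbs : ℤ)} :=
    Ideal.span_singleton_eq_span_singleton.mpr (Int.associated_natAbs z)
  have hqJ : (q : ℤ) ∈ J := by
    show f (q : ℤ) ∈ I
    have : f (q : ℤ) = 0 := by simp [f]
    rw [this]; exact I.zero_mem
  refine ⟨z.natAbs, ?_, ?_⟩
  · have : (q : ℤ) ∈ Ideal.span {(z.natAbs : ℤ)} := by
      rw [show Ideal.span {(z.natAbs : ℤ)} = J from hassoc.symm.trans hz.symm]; exact hqJ
    rw [Ideal.mem_span_singleton] at this
    exact_mod_cast Int.natCast_dvd_natCast.mp (Int.natAbs_dvd.mpr this)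
  · have hmap : I = J.map f := (Ideal.map_comap_of_surjective f hfsurj I).symm
    rw [hmap, show J = Ideal.span {(z.natAbs : ℤ)} from hz.trans hassoc]
    rw [Ideal.map_span, Set.image_singleton]
    congr 2
    exact Int.cast_natCast z.natAbs

lemma baer_of_solv {q : ℕ} (hq : q ≠ 0) (Q : Type v) [AddCommGroup Q] [Module (ZMod q) Q]
    (hsolv : ∀ d : ℕ, d ∣ q → ∀ s : Q, (q / d) • s = 0 → ∃ y : Q, (d : ZMod q) • y = s) :
    Module.Baer (ZMod q) Q := by
  intro I g
  obtain ⟨d, hdq, rfl⟩ := ideal_zmod_span hq I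
  have hmem : (d : ZMod q) ∈ Ideal.span {(d : ZMod q)} := Ideal.subset_span rfl
  set s : Q := g ⟨(d : ZMod q), hmem⟩ with hs_def
  have hzero : ((q / d) • (⟨(d : ZMod q), hmem⟩ : Ideal.span {(d : ZMod q)})) = 0 := by
    apply Subtype.ext
    show (q / d : ℕ) • (d : ZMod q) = 0
    rw [nsmul_eq_mul, ← Nat.cast_mul, Nat.div_mul_cancel hdq, ZMod.natCast_self]
  have hs : (q / d) • s = 0 := by
    rw [hs_def, ← map_nsmul, hzero, map_zero]
  obtain ⟨y, hy⟩ := hsolv d hdq s hs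
  refine ⟨LinearMap.toSpanSingleton (ZMod q) Q y, ?_⟩
  intro x hx
  obtain ⟨r, hr⟩ := Ideal.mem_span_singleton'.mp hx
  have hxel : (⟨x, hx⟩ : Ideal.span {(d : ZMod q)}) = r • ⟨(d : ZMod q), hmem⟩ := by
    apply Subtype.ext
    show x = r • (d : ZMod q)
    rw [smul_eq_mul, hr]
  rw [hxel, map_smul, ← hs_def]
  show x • y = r • s
  rw [← hy, ← hr, smul_smul]

/-- `ULift (ZMod q)` is an injective `ZMod q`-module. -/
lemma injective_ulift (q : ℕ) (hq : q ≠ 0) :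
    Module.Injective (ZMod q) (ULift.{v} (ZMod q)) :=
  (baer_of_solv hq _ (fun _ hd s hs => ulift_solve hq hd s hs)).injective

/-- `⨁ ℕ, ULift (ZMod q)` is an injective `ZMod q`-module. -/
lemma injective_dsum (q : ℕ) (hq : q ≠ 0) :
    Module.Injective (ZMod q) (Π₀ (_ : ℕ), ULift.{v} (ZMod q)) :=
  (baer_of_solv hq _ (fun _ hd s hs => dsum_solve hq hd s hs)).injective

end Baer
section Step

variable {G : Type u} [AddCommGroup G]

structure StepData (H : AddSubgroup G) where
  a : G
  H' : AddSubgroup G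
  ha : a ∈ H
  hle : H' ≤ H
  hinf : Infinite H'
  hord : addOrderOf a = AddMonoid.exponent H
  hind : ∀ k : ℤ, k • a ∈ H' → k • a = 0
  p : H →+ G
  hp1 : ∀ x, p x ∈ H'
  hp2 : ∀ y (hy' : y ∈ H') (hy : y ∈ H), p ⟨y, hy⟩ = y

variable {c : ℕ}

noncomputable def step (hc : c ≠ 0) (hann : ∀ g : G, c • g = 0)
    (H : AddSubgroup G) (hinf : Infinite H) : StepData H := by
  classical
  set q := AddMonoid.exponent H with hq_def
  have hqann : ∀ x : H, q • x = 0 := fun x => AddMonoid.exponent_nsmul_eq_zero x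
  have hqc : q ∣ c := by
    apply AddMonoid.exponent_dvd_of_forall_nsmul_eq_zero
    intro x
    apply Subtype.ext
    simpa using hann (↑x)
  have hq : q ≠ 0 := by
    rintro h; rw [h] at hqc
    exact hc (Nat.eq_zero_of_zero_dvd hqc)
  haveI : NeZero q := ⟨hq⟩
  have hex := AddMonoid.exists_addOrderOf_eq_exponent
    (AddMonoid.exponent_ne_zero.mp (hq_def ▸ hq))
  set x := hex.choose with hx_def
  have hx : addOrderOf x = AddMonoid.exponent H := hex.choose_spec
  haveI : Module (ZMod q) H := AddCommGroup.zmodModule hqann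
  let u0 : ULift.{u} (ZMod q) →+ H := AddMonoidHom.mk' (fun r => r.down • x)
    (by intro r s; show (r.down + s.down) • x = _; rw [add_smul])
  let u : ULift.{u} (ZMod q) →ₗ[ZMod q] H := u0.toZModLinearMap q
  have hu_apply : ∀ r : ULift.{u} (ZMod q), u r = r.down • x := fun _ => rfl
  have hu_one : u (ULift.up 1) = x := by rw [hu_apply]; exact one_smul _ x
  have hu_inj : Function.Injective u := by
    intro r s hrs
    have h0 : (r - s).down • x = 0 := by
      have : u (r - s) = 0 := by rw [map_sub, hrs, sub_self]
      rwa [hu_apply] at this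
    have h1 : ((r - s).down.val : ℕ) • x = 0 := by
      rw [← ZMod.natCast_zmod_val (r - s).down, Nat.cast_smul_eq_nsmul] at h0
      exact h0
    have h2 : addOrderOf x ∣ (r - s).down.val := addOrderOf_dvd_of_nsmul_eq_zero h1
    rw [hx, ← hq_def] at h2
    have h3 : (r - s).down.val = 0 := Nat.eq_zero_of_dvd_of_lt h2 (ZMod.val_lt _)
    have h4 : r - s = 0 := by
      apply ULift.ext
      show (r - s).down = 0
      rwa [ZMod.val_eq_zero] at h3
    exact sub_eq_zero.mp h4
  have hhex := (injective_ulift.{u} q hq).out u hu_inj LinearMap.id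
  set h := hhex.choose with hh_def
  have hh' : ∀ r, h (u r) = r := fun r => hhex.choose_spec r
  have hhx : h x = ULift.up 1 := by rw [← hu_one, hh']
  refine { a := ↑x, H' := ((LinearMap.ker h).toAddSubgroup).map H.subtype,
           ha := x.2, hle := ?_, hinf := ?_, hord := ?_, hind := ?_,
           p := AddMonoidHom.mk' (fun z => (↑(z - u (h z)) : G)) ?_,
           hp1 := ?_, hp2 := ?_ }
  · -- hle
    rintro y ⟨w, hw, rfl⟩
    exact w.2
  · -- hinf
    by_contra hfin
    rw [not_infinite_iff_finite] at hfin
    haveI := hfin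
    have hsurj : Function.Surjective
        (fun rw : ULift.{u} (ZMod q) × ((LinearMap.ker h).toAddSubgroup.map H.subtype) =>
          u rw.1 + ⟨↑rw.2, by rcases rw.2.2 with ⟨w, hw, hww⟩; rw [← hww]; exact w.2⟩) := by
      intro z
      have hker : z - u (h z) ∈ LinearMap.ker h := by
        rw [LinearMap.mem_ker, map_sub, hh', sub_self]
      refine ⟨⟨h z, ⟨↑(z - u (h z)), ⟨z - u (h z), hker, rfl⟩⟩⟩, ?_⟩
      apply Subtype.ext
      show (↑(u (h z)) : G) + ↑(z - u (h z)) = ↑z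
      push_cast
      abel
    haveI := Finite.of_surjective _ hsurj
    exact not_finite H
  · -- hord
    rw [← hx]
    exact addOrderOf_injective H.subtype Subtype.coe_injective x
  · -- hind
    intro k hk
    have hkx : (↑(k • x) : G) = k • (↑x : G) := by push_cast; rfl
    rw [← hkx] at hk ⊢
    rcases hk with ⟨w, hw, hww⟩
    have hwx : w = k • x := Subtype.coe_injective hww
    rw [hwx] at hw
    have hw0 : h (k • x) = 0 := hw
    have : k • h x = 0 := by rw [← map_zsmul]; exact hw0
    rw [hhx] at this
    have hdown : k • (1 : ZMod q) = 0 := congrArg ULift.down this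
    have hcast : ((k : ZMod q)) = 0 := by
      rwa [zsmul_eq_mul, mul_one] at hdown
    have hdvd : (q : ℤ) ∣ k := (ZMod.intCast_zmod_eq_zero_iff_dvd k q).mp hcast
    rcases hdvd with ⟨t, rfl⟩
    have : ((q : ℤ) * t) • x = 0 := by
      rw [mul_comm, mul_zsmul, natCast_zsmul, hqann, smul_zero]
    rw [show ((((q : ℤ) * t) • x : H) : G) = ↑(((q : ℤ) * t) • x) from rfl, this]
    rfl
  · -- p additive
    intro z w
    show (↑((z + w) - u (h (z + w))) : G) = ↑(z - u (h z)) + ↑(w - u (h w))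
    rw [map_add, map_add]
    push_cast
    abel
  · -- hp1
    intro z
    refine ⟨z - u (h z), ?_, rfl⟩
    show h (z - u (h z)) = 0
    rw [map_sub, hh', sub_self]
  · -- hp2
    intro y hy' hy
    rcases hy' with ⟨w, hw, hww⟩
    have hwy : w = ⟨y, hy⟩ := Subtype.coe_injective hww
    rw [hwy] at hw
    have hw0 : h ⟨y, hy⟩ = 0 := hw
    show (↑((⟨y, hy⟩ : H) - u (h ⟨y, hy⟩)) : G) = y
    rw [hw0, map_zero, sub_zero]

end Step

section Main

variable {G : Type u} [AddCommGroup G] {c : ℕ}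

variable (hc : c ≠ 0) (hann : ∀ g : G, c • g = 0) [Infinite G]

noncomputable def chain : ℕ → {H : AddSubgroup G // Infinite H}
  | 0 => ⟨⊤, Infinite.of_injective (fun g => ⟨g, trivial⟩)
      (fun _ _ hab => congrArg Subtype.val hab)⟩
  | n + 1 =>
    ⟨(step hc hann (chain n).1 (chain n).2).H', (step hc hann (chain n).1 (chain n).2).hinf⟩

noncomputable def sd (n : ℕ) : StepData ((chain hc hann n).1) :=
  step hc hann (chain hc hann n).1 (chain hc hann n).2

lemma chain_succ (n : ℕ) : (chain hc hann (n + 1)).1 = (sd hc hann n).H' := rfl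

lemma chain_le (m n : ℕ) (h : m ≤ n) : (chain hc hann n).1 ≤ (chain hc hann m).1 := by
  induction n, h using Nat.le_induction with
  | base => exact le_rfl
  | succ n hmn ih =>
    refine le_trans ?_ ih
    rw [chain_succ]
    exact (sd hc hann n).hle

/-- The exponent of the `n`-th subgroup in the chain. -/
noncomputable def qe (n : ℕ) : ℕ := AddMonoid.exponent (chain hc hann n).1

lemma qe_ne_zero (n : ℕ) : qe hc hann n ≠ 0 := by
  have hqc : qe hc hann n ∣ c := by
    apply AddMonoid.exponent_dvd_of_forall_nsmul_eq_zero
    intro x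
    apply Subtype.ext
    simpa using hann (↑x)
  intro h; rw [h] at hqc
  exact hc (Nat.eq_zero_of_zero_dvd hqc)

lemma qe_succ_dvd (n : ℕ) : qe hc hann (n + 1) ∣ qe hc hann n := by
  apply AddMonoid.exponent_dvd_of_forall_nsmul_eq_zero
  intro x
  have hx : (↑x : G) ∈ (chain hc hann n).1 := chain_le hc hann n (n+1) (Nat.le_succ n) x.2
  have := AddMonoid.exponent_nsmul_eq_zero (⟨(↑x : G), hx⟩ : (chain hc hann n).1)
  apply Subtype.ext
  have := congrArg Subtype.val this
  simpa [qe] using this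

lemma qe_le (m n : ℕ) (h : m ≤ n) : qe hc hann n ≤ qe hc hann m := by
  induction n, h using Nat.le_induction with
  | base => exact le_rfl
  | succ n hmn ih =>
    refine le_trans ?_ ih
    exact Nat.le_of_dvd (Nat.pos_of_ne_zero (qe_ne_zero hc hann n)) (qe_succ_dvd hc hann n)

lemma qe_stab : ∃ M : ℕ, ∀ n, M ≤ n → qe hc hann n = qe hc hann M := by
  have hne : (Set.range (qe hc hann)).Nonempty := ⟨_, ⟨0, rfl⟩⟩
  obtain ⟨M, hM⟩ := Nat.sInf_mem hne
  refine ⟨M, fun n hn => le_antisymm (qe_le hc hann M n hn) ?_⟩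
  rw [hM]
  exact Nat.sInf_le ⟨n, rfl⟩




noncomputable def MM : ℕ := (qe_stab hc hann).choose

lemma MM_spec : ∀ n, MM hc hann ≤ n → qe hc hann n = qe hc hann (MM hc hann) :=
  (qe_stab hc hann).choose_spec

/-- The stable exponent. -/
noncomputable def QQ : ℕ := qe hc hann (MM hc hann)

lemma QQ_ne_zero : QQ hc hann ≠ 0 := qe_ne_zero hc hann _

lemma QQ_ann : ∀ x : (chain hc hann (MM hc hann)).1, QQ hc hann • x = 0 := fun x =>
  AddMonoid.exponent_nsmul_eq_zero x

lemma QQ_gt_one : 1 < QQ hc hann := by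
  rcases Nat.lt_or_ge 1 (QQ hc hann) with h | h
  · exact h
  · exfalso
    have h0 := QQ_ne_zero hc hann
    have h1 : QQ hc hann = 1 := by omega
    have : ∀ x : (chain hc hann (MM hc hann)).1, x = 0 := by
      intro x
      have := QQ_ann hc hann x
      rwa [h1, one_nsmul] at this
    have hsub : Subsingleton (chain hc hann (MM hc hann)).1 :=
      ⟨fun a b => by rw [this a, this b]⟩
    haveI := hsub
    haveI : Finite (chain hc hann (MM hc hann)).1 := Finite.of_subsingleton
    haveI := (chain hc hann (MM hc hann)).2
    exact not_finite (chain hc hann (MM hc hann)).1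

noncomputable def bb (i : ℕ) : G := (sd hc hann (MM hc hann + i)).a

lemma bb_mem (i : ℕ) : bb hc hann i ∈ (chain hc hann (MM hc hann + i)).1 :=
  (sd hc hann _).ha

lemma bb_mem_M (i : ℕ) : bb hc hann i ∈ (chain hc hann (MM hc hann)).1 :=
  chain_le hc hann _ _ (Nat.le_add_right _ _) (bb_mem hc hann i)

lemma bb_ord (i : ℕ) : addOrderOf (bb hc hann i) = QQ hc hann := by
  have h := (sd hc hann (MM hc hann + i)).hord
  have h2 : AddMonoid.exponent ((chain hc hann (MM hc hann + i)).1) =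
      qe hc hann (MM hc hann + i) := rfl
  rw [h2, MM_spec hc hann _ (Nat.le_add_right _ _)] at h
  exact h

lemma bb_ind (i : ℕ) : ∀ k : ℤ,
    k • bb hc hann i ∈ (chain hc hann (MM hc hann + i + 1)).1 → k • bb hc hann i = 0 := by
  intro k hk
  apply (sd hc hann (MM hc hann + i)).hind
  rwa [← chain_succ hc hann (MM hc hann + i)]

/-- The direct sum `⊕ℕ Z/QQ`. -/
noncomputable def DD : Type u := Π₀ (_ : ℕ), ULift.{u} (ZMod (QQ hc hann))

noncomputable instance : AddCommGroup (DD hc hann) := by unfold DD; infer_instance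

noncomputable instance : Module (ZMod (QQ hc hann)) (DD hc hann) := by unfold DD; infer_instance

abbrev DDa : Type u := Π₀ (_ : ℕ), ULift.{u} (ZMod (QQ hc hann))

noncomputable def uDcomp (i : ℕ) :
    ULift.{u} (ZMod (QQ hc hann)) →+ ((chain hc hann (MM hc hann)).1) :=
  AddMonoidHom.mk' (fun r => r.down.val •
      (⟨bb hc hann i, bb_mem_M hc hann i⟩ : (chain hc hann (MM hc hann)).1))
    (by
      intro r s
      haveI : NeZero (QQ hc hann) := ⟨QQ_ne_zero hc hann⟩
      show (r.down + s.down).val • _ = _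
      rw [ZMod.val_add, nsmul_mod _ (QQ_ann hc hann _), add_nsmul])

noncomputable def uD : DDa hc hann →+ ((chain hc hann (MM hc hann)).1) :=
  DFinsupp.sumAddHom (fun i => uDcomp hc hann i)

lemma uD_of (i : ℕ) (r : ULift.{u} (ZMod (QQ hc hann))) :
    uD hc hann (DFinsupp.single i r) = r.down.val •
      (⟨bb hc hann i, bb_mem_M hc hann i⟩ : (chain hc hann (MM hc hann)).1) :=
  DFinsupp.sumAddHom_single (β := fun _ : ℕ => ULift.{u} (ZMod (QQ hc hann)))
    (fun i => uDcomp hc hann i) i r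

lemma uD_supp_mem (k : ℕ) (x : DDa hc hann) (hx : ∀ i, x i ≠ 0 → k ≤ i) :
    (↑(uD hc hann x) : G) ∈ (chain hc hann (MM hc hann + k)).1 := by
  classical
  revert hx
  induction x using DFinsupp.induction with
  | h0 =>
    intro _
    rw [map_zero]
    exact zero_mem _
  | ha i b f hfi hb ih =>
    intro hx
    have hib : ((DFinsupp.single i b + f : DDa hc hann)) i ≠ 0 := by
      rw [DFinsupp.add_apply, DFinsupp.single_eq_same, hfi, add_zero]
      exact hb
    have hki : k ≤ i := hx i hib
    rw [map_add]
    push_cast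
    apply add_mem
    · rw [uD_of]
      have hmem : b.down.val • bb hc hann i ∈ (chain hc hann (MM hc hann + i)).1 :=
        nsmul_mem (bb_mem hc hann i) _
      have hle := chain_le hc hann (MM hc hann + k) (MM hc hann + i) (by omega)
      have : (↑(b.down.val •
          (⟨bb hc hann i, bb_mem_M hc hann i⟩ : (chain hc hann (MM hc hann)).1)) : G)
          = b.down.val • bb hc hann i := by push_cast; rfl
      rw [this]
      exact hle hmem
    · apply ih
      intro j hj
      apply hx j
      rw [DFinsupp.add_apply]
      rcases eq_or_ne j i with rfl | hne
      · rw [hfi] at hj; exact absurd rfl hj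
      · rw [DFinsupp.single_eq_of_ne hne, zero_add]
        exact hj

lemma uD_ker (n : ℕ) : ∀ (k : ℕ) (x : DDa hc hann),
    (∀ i, x i ≠ 0 → k ≤ i ∧ i < k + n) → uD hc hann x = 0 → x = 0 := by
  classical
  induction n with
  | zero =>
    intro k x hx _
    apply DFinsupp.ext
    intro i
    by_contra hi
    have := hx i hi
    omega
  | succ n ih =>
    intro k x hx h0
    haveI : NeZero (QQ hc hann) := ⟨QQ_ne_zero hc hann⟩
    set r := x k with hr_def
    set y := DFinsupp.erase k x with hy_def
    have hdecomp : DFinsupp.single k r + y = x := DFinsupp.single_add_erase k x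
    have hsum : uD hc hann (DFinsupp.single k r) + uD hc hann y = 0 := by
      rw [← map_add, hdecomp, h0]
    have hyk : ∀ i, y i ≠ 0 → (k+1) ≤ i ∧ i < (k+1) + n := by
      intro i hi
      rcases eq_or_ne i k with rfl | hne
      · rw [hy_def, DFinsupp.erase_apply, if_pos rfl] at hi
        exact absurd rfl hi
      · have hxi : x i ≠ 0 := by
          rw [hy_def, DFinsupp.erase_apply, if_neg hne] at hi
          exact hi
        have := hx i hxi
        omega
    have hymem : (↑(uD hc hann y) : G) ∈ (chain hc hann (MM hc hann + (k+1))).1 :=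
      uD_supp_mem hc hann (k+1) y (fun i hi => (hyk i hi).1)
    have hsingle : (↑(uD hc hann (DFinsupp.single k r)) : G) = r.down.val • bb hc hann k := by
      rw [uD_of]
      push_cast
      rfl
    have hneg : (↑(uD hc hann (DFinsupp.single k r)) : G) = -(↑(uD hc hann y) : G) := by
      have := congrArg (fun z : (chain hc hann (MM hc hann)).1 => (z : G)) hsum
      simp only [AddSubgroup.coe_add] at this
      push_cast at this
      exact eq_neg_of_add_eq_zero_left this
    have hmem : r.down.val • bb hc hann k ∈ (chain hc hann (MM hc hann + k + 1)).1 := by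
      rw [← hsingle, hneg]
      have : MM hc hann + k + 1 = MM hc hann + (k + 1) := by omega
      rw [this]
      exact neg_mem hymem
    have hzero : (r.down.val : ℤ) • bb hc hann k = 0 := by
      apply bb_ind hc hann k
      rwa [natCast_zsmul]
    have hzero' : r.down.val • bb hc hann k = 0 := by
      rwa [natCast_zsmul] at hzero
    have hdvd : QQ hc hann ∣ r.down.val := by
      have := addOrderOf_dvd_of_nsmul_eq_zero hzero'
      rwa [bb_ord hc hann k] at this
    have hval : r.down.val = 0 := Nat.eq_zero_of_dvd_of_lt hdvd (ZMod.val_lt _)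
    have hr0 : r = 0 := by
      apply ULift.ext
      rwa [ZMod.val_eq_zero] at hval
    have hy0 : uD hc hann y = 0 := by
      rw [hr0] at hsum
      simpa using hsum
    have : y = 0 := ih (k+1) y hyk hy0
    rw [← hdecomp, hr0, this]
    simp

lemma uD_inj : Function.Injective (uD hc hann) := by
  classical
  intro xx yy hxy
  have h0 : uD hc hann (xx - yy) = 0 := by rw [map_sub, hxy, sub_self]
  have hbound : ∀ i, (xx - yy) i ≠ 0 → 0 ≤ i ∧ i < 0 + ((xx - yy).support.sup id + 1) := by
    intro i hi
    have : i ∈ (xx - yy).support := DFinsupp.mem_support_iff.mpr hi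
    have := Finset.le_sup (f := id) this
    simp only [id] at this
    omega
  have := uD_ker hc hann _ 0 (xx - yy) hbound h0
  exact sub_eq_zero.mp this

lemma chain_zero : (chain hc hann 0).1 = (⊤ : AddSubgroup G) := rfl

noncomputable def pii : (n : ℕ) → (G →+ (chain hc hann n).1)
  | 0 => (AddMonoidHom.id G).codRestrict _ (fun g => by rw [chain_zero]; trivial)
  | n + 1 => ((sd hc hann n).p.codRestrict _
      (fun z => by rw [chain_succ hc hann n]; exact (sd hc hann n).hp1 z)).comp (pii n)

lemma pii_mem : ∀ (n : ℕ) (y : G) (hy : y ∈ (chain hc hann n).1), (↑(pii hc hann n y) : G) = y := by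
  intro n
  induction n with
  | zero => intro y hy; rfl
  | succ n ih =>
    intro y hy
    have hyn : y ∈ (chain hc hann n).1 := chain_le hc hann n (n+1) (Nat.le_succ n) hy
    show (↑((sd hc hann n).p ((pii hc hann n) y)) : G) = y
    have hp : pii hc hann n y = ⟨y, hyn⟩ := Subtype.ext (ih y hyn)
    rw [hp]
    apply (sd hc hann n).hp2
    rw [← chain_succ hc hann n]
    exact hy

end Main

section Final

lemma finite_of_periodic {G : Type u} [AddCommGroup G]
    (hper : IsPeriodicRing (AddMonoid.End G)) : Finite G := by
  classical
  by_contra hfin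
  haveI : Infinite G := not_finite_iff_infinite.mp hfin
  -- Step 1: G is bounded
  obtain ⟨c, hc, hann⟩ : ∃ c : ℕ, c ≠ 0 ∧ ∀ g : G, c • g = 0 := by
    set e : AddMonoid.End G := 1 + 1 with he_def
    have he : ∀ (k : ℕ) (g : G), (e ^ k) g = 2 ^ k • g := by
      intro k
      induction k with
      | zero => intro g; rw [pow_zero, pow_zero, one_smul]; exact AddMonoid.End.one_apply g
      | succ k ih =>
        intro g
        have h1 : e ^ (k+1) = e ^ k * e := pow_succ e k
        have h2 : (e ^ (k+1)) g = (e ^ k) (e g) := by rw [h1]; rfl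
        have h3 : e g = 2 • g := by
          show (1 : AddMonoid.End G) g + (1 : AddMonoid.End G) g = 2 • g
          rw [AddMonoid.End.one_apply, two_nsmul]
        rw [h2, h3, ih (2 • g), smul_smul, ← pow_succ]
    obtain ⟨m, n, hn, hmn, hp⟩ := hper e
    refine ⟨2 ^ m - 2 ^ n, ?_, ?_⟩
    · have : 2 ^ n < 2 ^ m := Nat.pow_lt_pow_right one_lt_two hmn
      omega
    · intro g
      have hgm : (e ^ m) g = (e ^ n) g := by rw [hp]
      rw [he m g, he n g] at hgm
      have h4 : 2 ^ n • g + (2 ^ m - 2 ^ n) • g = 2 ^ n • g + 0 := by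
        rw [← add_nsmul, add_zero]
        have hle : 2 ^ n ≤ 2 ^ m := Nat.pow_le_pow_right (by omega) (le_of_lt hmn)
        rw [Nat.add_sub_cancel' hle]
        exact hgm
      exact add_left_cancel h4
  -- Step 2: the machinery
  haveI : NeZero (QQ hc hann) := ⟨QQ_ne_zero hc hann⟩
  haveI : Fact (1 < QQ hc hann) := ⟨QQ_gt_one hc hann⟩
  haveI : Module (ZMod (QQ hc hann)) ((chain hc hann (MM hc hann)).1) :=
    AddCommGroup.zmodModule (QQ_ann hc hann)
  set uL : DDa hc hann →ₗ[ZMod (QQ hc hann)] ((chain hc hann (MM hc hann)).1) :=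
    (uD hc hann).toZModLinearMap (QQ hc hann) with huL_def
  have huL_inj : Function.Injective uL := uD_inj hc hann
  obtain ⟨rho, hrho⟩ := (injective_dsum.{u} (QQ hc hann) (QQ_ne_zero hc hann)).out
    uL huL_inj LinearMap.id
  -- the shift on the direct sum
  set shiftD : DDa hc hann →+ DDa hc hann :=
    DFinsupp.sumAddHom (fun i => DFinsupp.singleAddHom
      (fun _ : ℕ => ULift.{u} (ZMod (QQ hc hann))) (i+1)) with hshift_def
  have hshift_single : ∀ (i : ℕ) (r : ULift.{u} (ZMod (QQ hc hann))),
      shiftD (DFinsupp.single i r) = DFinsupp.single (i+1) r := by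
    intro i r
    rw [hshift_def]
    rw [DFinsupp.sumAddHom_single (β := fun _ : ℕ => ULift.{u} (ZMod (QQ hc hann)))]
    rfl
  set f : AddMonoid.End G := ((chain hc hann (MM hc hann)).1.subtype).comp
    ((uD hc hann).comp (shiftD.comp ((rho.toAddMonoidHom).comp
      (pii hc hann (MM hc hann))))) with hf_def
  have hkey : ∀ z : DDa hc hann, f (↑(uD hc hann z)) = ↑(uD hc hann (shiftD z)) := by
    intro z
    have h1 : pii hc hann (MM hc hann) (↑(uD hc hann z)) = uD hc hann z :=
      Subtype.ext (pii_mem hc hann (MM hc hann) _ (uD hc hann z).2)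
    have h2 : rho (uD hc hann z) = z := hrho z
    show (↑(uD hc hann (shiftD (rho (pii hc hann (MM hc hann) (↑(uD hc hann z)))))) : G) = _
    rw [h1, h2]
  set one : ULift.{u} (ZMod (QQ hc hann)) := ULift.up 1 with hone_def
  have hone_ne : one ≠ 0 := by
    intro h
    have := congrArg ULift.down h
    exact one_ne_zero this
  have hkey2 : ∀ t : ℕ, ((f ^ t : AddMonoid.End G)) (↑(uD hc hann (DFinsupp.single 0 one)))
      = ↑(uD hc hann (DFinsupp.single t one)) := by
    intro t
    induction t with
    | zero => exact AddMonoid.End.one_apply _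
    | succ t ih =>
      have h1 : ((f ^ (t+1) : AddMonoid.End G)) (↑(uD hc hann (DFinsupp.single 0 one)))
          = f (((f ^ t : AddMonoid.End G)) (↑(uD hc hann (DFinsupp.single 0 one)))) := by
        rw [pow_succ']
        rfl
      rw [h1, ih, hkey, hshift_single]
  obtain ⟨m, n, hn, hmn, hp⟩ := hper f
  have happ : (↑(uD hc hann (DFinsupp.single m one)) : G)
      = ↑(uD hc hann (DFinsupp.single n one)) := by
    rw [← hkey2 m, ← hkey2 n, hp]
  have heq : (DFinsupp.single m one : DDa hc hann) = DFinsupp.single n one :=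
    uD_inj hc hann (Subtype.ext happ)
  have hm : (DFinsupp.single m one : DDa hc hann) m = one := DFinsupp.single_eq_same
  rw [heq, DFinsupp.single_eq_of_ne (by omega : m ≠ n)] at hm
  exact hone_ne hm.symm

end Final

/-- For an abelian group `G`, the endomorphism ring `E(G)` is periodic if and only
if `G` is a finite group. -/
theorem end_abelianGroup_periodic_iff_finite (G : Type*) [AddCommGroup G] :
    IsPeriodicRing (AddMonoid.End G) ↔ Finite G := by
  constructor
  · exact finite_of_periodic
  · intro hfin
    haveI := hfin
    haveI : Finite (AddMonoid.End G) :=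
      Finite.of_injective (fun f => (f : G → G)) DFunLike.coe_injective
    intro x
    obtain ⟨t, s, hts, heq⟩ := Finite.exists_ne_map_eq_of_infinite (fun t : ℕ => x ^ (t+1))
    rcases lt_or_gt_of_ne hts with h | h
    · exact ⟨s + 1, t + 1, by omega, by omega, heq.symm⟩
    · exact ⟨t + 1, s + 1, by omega, by omega, heq⟩
end

section
/- Let k be a commutative ring and let A and B be commutative k-algebras which, as rings, are periodic. Then the tensor product algebra A ⊗[k] B is a periodic ring. -/
open scoped TensorProduct

/-- Eventual periodicity of powers. -/
lemma pow_eventually_periodic {R : Type*} [Monoid R] {x : R} {m n : ℕ}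
    (hnm : n < m) (h : x ^ m = x ^ n) :
    ∀ t j, n ≤ j → x ^ (j + t * (m - n)) = x ^ j := by
  intro t
  induction t with
  | zero => simp
  | succ t ih =>
    intro j hj
    have h1 : x ^ (j + (m - n)) = x ^ j := by
      have e1 : j + (m - n) = (j - n) + m := by omega
      have e2 : j = (j - n) + n := by omega
      rw [e1, pow_add, h, ← pow_add, ← e2]
    have e3 : j + (t + 1) * (m - n) = (j + (m - n)) + t * (m - n) := by ring
    rw [e3, ih _ (by omega), h1]

lemma tmul_periodic {A B : Type*} (k : Type*) [CommRing A] [CommRing B] [CommRing k]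
    [Algebra k A] [Algebra k B]
    (hA : IsPeriodicRing A) (hB : IsPeriodicRing B) (a : A) (b : B) :
    ∃ m n : ℕ, 0 < n ∧ n < m ∧ (a ⊗ₜ[k] b) ^ m = (a ⊗ₜ[k] b) ^ n := by
  obtain ⟨m₁, n₁, hn₁, hmn₁, h₁⟩ := hA a
  obtain ⟨m₂, n₂, hn₂, hmn₂, h₂⟩ := hB b
  set n0 : ℕ := max n₁ n₂
  set p : ℕ := (m₁ - n₁) * (m₂ - n₂)
  have hp : 0 < p := Nat.mul_pos (by omega) (by omega)
  refine ⟨n0 + p, n0, by omega, by omega, ?_⟩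
  have ha : a ^ (n0 + p) = a ^ n0 := by
    have := pow_eventually_periodic hmn₁ h₁ (m₂ - n₂) n0 (le_max_left _ _)
    simpa [p, mul_comm] using this
  have hb : b ^ (n0 + p) = b ^ n0 := by
    have := pow_eventually_periodic hmn₂ h₂ (m₁ - n₁) n0 (le_max_right _ _)
    simpa [p, mul_comm] using this
  rw [Algebra.TensorProduct.tmul_pow, Algebra.TensorProduct.tmul_pow, ha, hb]

/-- An element with `x ^ m = x ^ n`, `n < m`, is integral over any base ring. -/
lemma isIntegral_of_pow_eq {R S : Type*} [CommRing R] [Nontrivial R] [CommRing S] [Algebra R S]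
    {x : S} {m n : ℕ} (hnm : n < m) (h : x ^ m = x ^ n) : IsIntegral R x := by
  refine ⟨Polynomial.X ^ m - Polynomial.X ^ n, ?_, ?_⟩
  · apply Polynomial.monic_X_pow_sub
    rw [Polynomial.degree_X_pow]
    exact_mod_cast hnm
  · simp [Polynomial.eval₂_sub, h, sub_eq_zero]

set_option synthInstance.maxHeartbeats 1000000 in
set_option maxHeartbeats 2000000 in
/-- If `A` and `B` are commutative `k`-algebras which are periodic as rings, then
the tensor product `A ⊗[k] B` is a periodic ring. -/
theorem periodic_tensorProduct_of_comm (k : Type*) [CommRing k]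
    (A B : Type*) [CommRing A] [CommRing B] [Algebra k A] [Algebra k B]
    (hA : IsPeriodicRing A) (hB : IsPeriodicRing B) :
    IsPeriodicRing (A ⊗[k] B) := by
  intro z
  -- find a positive natural number `N` with `N = 0` in `A`
  obtain ⟨m₀, n₀, hn₀, hmn₀, h₀⟩ := hA 2
  set N : ℕ := 2 ^ m₀ - 2 ^ n₀ with hNdef
  have hle : 2 ^ n₀ ≤ 2 ^ m₀ := Nat.pow_le_pow_right (by norm_num) hmn₀.le
  have hlt : 2 ^ n₀ < 2 ^ m₀ := Nat.pow_lt_pow_right (by norm_num) hmn₀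
  have hN2 : 2 ≤ N := by
    have hp1 : 2 ^ (n₀ + 1) = 2 ^ n₀ * 2 := pow_succ 2 n₀
    have hle' : 2 ^ (n₀ + 1) ≤ 2 ^ m₀ := Nat.pow_le_pow_right (by norm_num) (by omega)
    have h3 : 2 ^ 1 ≤ 2 ^ n₀ := Nat.pow_le_pow_right (by norm_num) (by omega)
    simp only [pow_one] at h3
    omega
  have hN : 0 < N := by omega
  have hNA : (N : A) = 0 := by
    have h2 : ((2 ^ m₀ : ℕ) : A) = ((2 ^ n₀ : ℕ) : A) := by push_cast; exact h₀
    rw [hNdef, Nat.cast_sub hle, h2, sub_self]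
  have hNR : (N : A ⊗[k] B) = 0 := by
    have h1 := map_natCast (Algebra.TensorProduct.includeLeft :
      A →ₐ[k] A ⊗[k] B) N
    rw [← h1, hNA, map_zero]
  haveI : NeZero N := ⟨hN.ne'⟩
  haveI : Fact (1 < N) := ⟨hN2⟩
  letI : Algebra (ZMod N) (A ⊗[k] B) := ZMod.algebra' _ _ (ringChar.dvd hNR)
  -- write `z` as a finite sum of pure tensors
  obtain ⟨S, rfl⟩ := TensorProduct.exists_finset z
  set s : Set (A ⊗[k] B) := (fun p : A × B => p.1 ⊗ₜ[k] p.2) '' ↑S with hs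
  have hfin : s.Finite := S.finite_toSet.image _
  have hint : ∀ x ∈ s, IsIntegral (ZMod N) x := by
    rintro x ⟨⟨a, b⟩, -, rfl⟩
    obtain ⟨m, n, _, hnm, h⟩ := tmul_periodic (k := k) hA hB a b
    exact isIntegral_of_pow_eq hnm h
  have hfg := fg_adjoin_of_finite hfin hint
  haveI : Module.Finite (ZMod N) (Algebra.adjoin (ZMod N) s) :=
    ⟨(Submodule.fg_top _).mpr hfg⟩
  haveI : Finite (Algebra.adjoin (ZMod N) s) := Module.finite_of_finite (ZMod N)
  have hz : (∑ p ∈ S, p.1 ⊗ₜ[k] p.2) ∈ Algebra.adjoin (ZMod N) s :=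
    Subalgebra.sum_mem _ fun p hp => Algebra.subset_adjoin ⟨p, hp, rfl⟩
  set w : Algebra.adjoin (ZMod N) s := ⟨_, hz⟩ with hw
  obtain ⟨i, j, hij, hpow⟩ :=
    Finite.exists_ne_map_eq_of_infinite (fun t : ℕ => w ^ (t + 1))
  have key : ∀ i j : ℕ, i < j → w ^ (j + 1) = w ^ (i + 1) →
      ∃ m n : ℕ, 0 < n ∧ n < m ∧
        (∑ p ∈ S, p.1 ⊗ₜ[k] p.2) ^ m = (∑ p ∈ S, p.1 ⊗ₜ[k] p.2) ^ n := by
    intro i j hlt' heq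
    refine ⟨j + 1, i + 1, by omega, by omega, ?_⟩
    have := congrArg (Subtype.val) heq
    simpa [hw] using this
  rcases hij.lt_or_gt with h | h
  · exact key i j h hpow.symm
  · exact key j i h hpow
end

section
/- Let k be a commutative ring and let A and B be k-algebras which are locally finite as rings (every finitely generated subring is finite, i.e., for every finite subset s the subring Subring.closure s is a finite set). Then the tensor product algebra A ⊗[k] B is locally finite as a ring. -/
open scoped TensorProduct

/-- A ring `R` is *locally finite* if every finitely generated subring of `R` is
finite: for every finite subset `s ⊆ R`, the subring generated by `s` is a finite
set. -/
def IsLocallyFiniteRing (R : Type*) [Ring R] : Prop :=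
  ∀ s : Finset R, ((Subring.closure (s : Set R) : Subring R) : Set R).Finite

private lemma nsmul_tmul {k : Type*} [CommRing k] {A B : Type*} [Ring A] [Ring B]
    [Algebra k A] [Algebra k B] (n : ℕ) (a : A) (b : B) :
    n • (a ⊗ₜ[k] b) = (n • a) ⊗ₜ[k] b := by
  induction n with
  | zero => simp
  | succ n ih => rw [succ_nsmul, succ_nsmul, ih, TensorProduct.add_tmul]

/-- If `A` and `B` are `k`-algebras which are locally finite as rings, then the
tensor product `A ⊗[k] B` is locally finite as a ring. -/
theorem locallyFinite_tensorProduct (k : Type*) [CommRing k]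
    (A B : Type*) [Ring A] [Ring B] [Algebra k A] [Algebra k B]
    (hA : IsLocallyFiniteRing A) (hB : IsLocallyFiniteRing B) :
    IsLocallyFiniteRing (A ⊗[k] B) := by
  intro s
  choose T hT using fun x : A ⊗[k] B => TensorProduct.exists_finset (R := k) x
  classical
  set sA : Finset A := s.biUnion fun x => (T x).image Prod.fst with hsA
  set sB : Finset B := s.biUnion fun x => (T x).image Prod.snd with hsB
  set RA : Subring A := Subring.closure (sA : Set A) with hRAdef
  set RB : Subring B := Subring.closure (sB : Set B) with hRBdef
  have hRA : (RA : Set A).Finite := hA sA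
  have hRB : (RB : Set B).Finite := hB sB
  set M : Set (A ⊗[k] B) := Set.image2 (· ⊗ₜ[k] ·) (RA : Set A) (RB : Set B) with hM
  have hMfin : M.Finite := hRA.image2 _ hRB
  set H : AddSubgroup (A ⊗[k] B) := AddSubgroup.closure M with hH
  have hHM : M ⊆ (H : Set (A ⊗[k] B)) := AddSubgroup.subset_closure
  -- H is closed under multiplication
  have hmulM : ∀ m ∈ M, ∀ y ∈ H, m * y ∈ H := by
    rintro m ⟨a, ha, b, hb, rfl⟩ y hy
    induction hy using AddSubgroup.closure_induction with
    | mem z hz =>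
      obtain ⟨a', ha', b', hb', rfl⟩ := hz
      rw [Algebra.TensorProduct.tmul_mul_tmul]
      exact hHM ⟨a * a', RA.mul_mem ha ha', b * b', RB.mul_mem hb hb', rfl⟩
    | zero => rw [mul_zero]; exact H.zero_mem
    | add z w _ _ hz hw => rw [mul_add]; exact H.add_mem hz hw
    | neg z _ hz => rw [mul_neg]; exact H.neg_mem hz
  have hmul : ∀ x ∈ H, ∀ y ∈ H, x * y ∈ H := by
    intro x hx y hy
    induction hx using AddSubgroup.closure_induction with
    | mem z hz => exact hmulM z hz y hy
    | zero => rw [zero_mul]; exact H.zero_mem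
    | add z w _ _ hz hw => rw [add_mul]; exact H.add_mem hz hw
    | neg z _ hz => rw [neg_mul]; exact H.neg_mem hz
  have h1 : (1 : A ⊗[k] B) ∈ H := by
    refine hHM ⟨1, RA.one_mem, 1, RB.one_mem, ?_⟩
    exact (Algebra.TensorProduct.one_def (R := k) (A := A) (B := B)).symm
  -- assemble a subring
  set S : Subring (A ⊗[k] B) :=
    { carrier := (H : Set (A ⊗[k] B))
      zero_mem' := H.zero_mem
      add_mem' := fun h1 h2 => H.add_mem h1 h2
      neg_mem' := fun h => H.neg_mem h
      one_mem' := h1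
      mul_mem' := fun hx hy => hmul _ hx _ hy } with hS
  -- s ⊆ S
  have hsS : (s : Set (A ⊗[k] B)) ⊆ (S : Set (A ⊗[k] B)) := by
    intro x hx
    have hx' : x = (T x).sum fun i => i.1 ⊗ₜ[k] i.2 := hT x
    rw [hx']
    refine H.sum_mem fun i hi => ?_
    refine hHM ⟨i.1, ?_, i.2, ?_, rfl⟩
    · exact Subring.subset_closure (by
        simp only [hsA, Finset.coe_biUnion, Set.mem_iUnion, Finset.coe_image, Set.mem_image]
        exact ⟨x, hx, i, hi, rfl⟩)
    · exact Subring.subset_closure (by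
        simp only [hsB, Finset.coe_biUnion, Set.mem_iUnion, Finset.coe_image, Set.mem_image]
        exact ⟨x, hx, i, hi, rfl⟩)
  have hle : (Subring.closure (s : Set (A ⊗[k] B)) : Set (A ⊗[k] B)) ⊆
      (H : Set (A ⊗[k] B)) := Subring.closure_le.mpr hsS
  -- H is finite: it is f.g. and torsion
  refine Set.Finite.subset ?_ hle
  haveI : Finite M := hMfin.to_subtype
  haveI : AddGroup.FG H := AddGroup.closure_finite_fg M
  have htor : AddMonoid.IsTorsion H := by
    rintro ⟨x, hx⟩
    have : ∃ n, 0 < n ∧ n • x = 0 := by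
      induction hx using AddSubgroup.closure_induction with
      | mem z hz =>
        obtain ⟨a, ha, b, hb, rfl⟩ := hz
        haveI : Finite RA := hRA.to_subtype
        refine ⟨Nat.card RA, Nat.card_pos, ?_⟩
        have hna : (Nat.card RA) • a = 0 := by
          have h0 : (Nat.card RA) • (⟨a, ha⟩ : RA) = 0 := card_nsmul_eq_zero'
          simpa [Subtype.ext_iff] using h0
        rw [nsmul_tmul, hna, TensorProduct.zero_tmul]
      | zero => exact ⟨1, one_pos, by simp⟩
      | add z w _ _ hz hw =>
        obtain ⟨n, hn, hnz⟩ := hz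
        obtain ⟨m, hm, hmw⟩ := hw
        refine ⟨n * m, Nat.mul_pos hn hm, ?_⟩
        rw [smul_add, mul_comm, mul_smul, hnz, smul_zero, mul_comm, mul_smul, hmw,
          smul_zero, add_zero]
      | neg z _ hz =>
        obtain ⟨n, hn, hnz⟩ := hz
        exact ⟨n, hn, by rw [smul_neg, hnz, neg_zero]⟩
    obtain ⟨n, hn, hnx⟩ := this
    rw [isOfFinAddOrder_iff_nsmul_eq_zero]
    exact ⟨n, hn, Subtype.ext (by simpa using hnx)⟩
  haveI : Finite H := AddCommGroup.finite_of_fg_torsion H htor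
  exact Set.finite_coe_iff.mp ‹Finite H›
end
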